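/- arXiv:2509.13231 — 2 statements merged into one kernel-verified Lean document; each statement's English description precedes it below -/
import Mathlib

section
/- Let 𝔪 be a nonempty symmetric multisegment in the bad-parity setting, with e_max the largest end of a segment of 𝔪, and let η₁ = [e(Δ_l), e(Δ₁)] be the segment of 𝔪₁ ending at e_max. Then η₁ is the longest among the segments of AD(𝔪) ending at e_max: every segment Δ of AD(𝔪) with e(Δ) = e_max satisfies ℓ(Δ) ≤ ℓ(η₁). -/
set_option linter.unusedSectionVars false
set_option linter.unusedVariables false
set_option linter.unusedTactic false


namespace AZ

/-- A segment in doubled coordinates: the pair `(a, b)` represents the segment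
`[a/2, b/2]` whose endpoints lie in `(1/2)ℤ`.  Thus the end `e(Δ)` is `Δ.2 / 2`,
the beginning `b(Δ)` is `Δ.1 / 2`, and `Δ` is centered iff `Δ.1 + Δ.2 = 0`. -/
abbrev Seg := ℤ × ℤ

namespace Seg

/-- Well-formedness of a segment: `a ≤ b` and `a ≡ b [ZMOD 2]`, i.e. `b - a ∈ 2ℕ`. -/
def WF (Δ : Seg) : Prop := Δ.1 ≤ Δ.2 ∧ Δ.1 % 2 = Δ.2 % 2

/-- The dual (contragredient) segment `Δ∨ = [−b, −a]`. -/
def dual (Δ : Seg) : Seg := (-Δ.2, -Δ.1)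

/-- `Δ⁻` : the segment with its end removed. -/
def trimEnd (Δ : Seg) : Seg := (Δ.1, Δ.2 - 2)

/-- `⁻Δ` : the segment with its beginning removed. -/
def trimBeg (Δ : Seg) : Seg := (Δ.1 + 2, Δ.2)

/-- `⁺Δ` : the segment with its beginning extended. -/
def extBeg (Δ : Seg) : Seg := (Δ.1 - 2, Δ.2)

/-- The order on segments: `[x₁,y₁] ≤ [x₂,y₂]` iff `x₁ < x₂`, or `x₁ = x₂` and `y₁ ≥ y₂`. -/
def le (Δ₁ Δ₂ : Seg) : Prop := Δ₁.1 < Δ₂.1 ∨ (Δ₁.1 = Δ₂.1 ∧ Δ₂.2 ≤ Δ₁.2)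

end Seg

/-- The condition for `next` to be a successor of `Δ j` in the bad-parity initial
sequence: `next ∈ m`, `next ≤ Δ j`, `e(next) = e(Δ j) − 1`, and if the dual of `next`
already occurs among `Δ 1, …, Δ j`, then `next` has multiplicity at least `2` in `m`. -/
def SuccBad (m : Multiset Seg) (Δ : ℕ → Seg) (j : ℕ) (next : Seg) : Prop :=
  next ∈ m ∧ Seg.le next (Δ j) ∧ next.2 = (Δ j).2 - 2 ∧
    ((∃ i, 1 ≤ i ∧ i ≤ j ∧ Seg.dual next = Δ i) → 2 ≤ m.count next)

/-- `Δ 1, …, Δ l` is the initial sequence in the bad-parity algorithm for `m`. -/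
structure IsInitSeqBad (m : Multiset Seg) (Δ : ℕ → Seg) (l : ℕ) : Prop where
  one_le : 1 ≤ l
  first_mem : Δ 1 ∈ m
  first_max_end : ∀ Λ ∈ m, Λ.2 ≤ (Δ 1).2
  first_max : ∀ Λ ∈ m, Λ.2 = (Δ 1).2 → Seg.le Λ (Δ 1)
  succ : ∀ j, 1 ≤ j → j < l → SuccBad m Δ j (Δ (j + 1))
  succ_max : ∀ j, 1 ≤ j → j < l → ∀ Λ, SuccBad m Δ j Λ → Seg.le Λ (Δ (j + 1))
  last : ∀ Λ, ¬ SuccBad m Δ l Λ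

/-- The multisegment `𝔪₁ = [e(Δ_l), e(Δ₁)] + [−e(Δ₁), −e(Δ_l)]`. -/
def mOneBad (Δ : ℕ → Seg) (l : ℕ) : Multiset Seg :=
  {((Δ l).2, (Δ 1).2), (-(Δ 1).2, -(Δ l).2)}

/-- The multiset of segments of an initial sequence. -/
def seqM (Δ : ℕ → Seg) (l : ℕ) : Multiset Seg := (Finset.Icc 1 l).val.map Δ

/-- The multisegment `𝔪#` : remove one copy of each `Δ i` and each `Δ i∨`, insert
`Δ i⁻` and `⁻(Δ i∨)` and discard empty segments. -/
def mHashBad (m : Multiset Seg) (Δ : ℕ → Seg) (l : ℕ) : Multiset Seg :=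
  (m - (seqM Δ l + (seqM Δ l).map Seg.dual)) +
    ((seqM Δ l).map Seg.trimEnd +
        (seqM Δ l).map (fun Δ0 => Seg.dual (Seg.trimEnd Δ0))).filter
      fun Δ0 => Δ0.1 ≤ Δ0.2

/-- The bad-parity duality algorithm `AD`, as a relation: `AD(0) = 0` and
`AD(𝔪) = 𝔪₁ + AD(𝔪#)`. -/
inductive IsADBad : Multiset Seg → Multiset Seg → Prop
  | zero : IsADBad 0 0
  | step {m : Multiset Seg} {Δ : ℕ → Seg} {l : ℕ} {d : Multiset Seg}
      (hm : m ≠ 0) (hseq : IsInitSeqBad m Δ l) (hrec : IsADBad (mHashBad m Δ l) d) :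
      IsADBad m (mOneBad Δ l + d)

/-- A valid symmetric multisegment in the bad-parity setting: every centered segment
has even multiplicity. -/
structure BadInput (m : Multiset Seg) : Prop where
  wf : ∀ Δ0 ∈ m, Seg.WF Δ0
  symm : m.map Seg.dual = m
  parity : ∀ Δ₁ ∈ m, ∀ Δ₂ ∈ m, Δ₁.2 % 2 = Δ₂.2 % 2
  evenCentered : ∀ Δ0 : Seg, Δ0.1 + Δ0.2 = 0 → Even (m.count Δ0)

/-- Index `i ∈ {1, …, l}` whose segment's dual also occurs in the initial sequence. -/
def HasDualPair (Δ : ℕ → Seg) (l i : ℕ) : Prop :=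
  1 ≤ i ∧ i ≤ l ∧ ∃ j, 1 ≤ j ∧ j ≤ l ∧ Seg.dual (Δ i) = Δ j

/-- `i₀ = min{i ∈ {1,…,l} : ∃ j ∈ {1,…,l}, Δ i∨ = Δ j}`. -/
def IsMinDual (Δ : ℕ → Seg) (l i₀ : ℕ) : Prop :=
  HasDualPair Δ l i₀ ∧ ∀ i, HasDualPair Δ l i → i₀ ≤ i

/-- `j₀ = max{j ∈ {1,…,l} : ∃ i ∈ {1,…,l}, Δ j∨ = Δ i}`. -/
def IsMaxDual (Δ : ℕ → Seg) (l j₀ : ℕ) : Prop :=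
  HasDualPair Δ l j₀ ∧ ∀ j, HasDualPair Δ l j → j ≤ j₀

/- ===================== helpers ===================== -/

lemma Seg.dual_dual (v : Seg) : Seg.dual (Seg.dual v) = v := by
  simp [Seg.dual]

lemma Seg.dual_inj : Function.Injective Seg.dual := by
  intro a b h
  have h1 : -a.2 = -b.2 := congrArg Prod.fst h
  have h2 : -a.1 = -b.1 := congrArg Prod.snd h
  exact Prod.ext (by omega) (by omega)

lemma seg_le_antisymm {a b : Seg} (h1 : Seg.le a b) (h2 : Seg.le b a) : a = b := by
  rcases h1 with h1 | ⟨h1, h1'⟩ <;> rcases h2 with h2 | ⟨h2, h2'⟩ <;>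
    exact Prod.ext (by omega) (by omega)

lemma count_map_Icc_le_one (f : ℕ → Seg) (l : ℕ) (v : Seg)
    (h : ∀ i j, 1 ≤ i → i ≤ l → 1 ≤ j → j ≤ l → f i = v → f j = v → i = j) :
    (((Finset.Icc 1 l).val.map f).count v) ≤ 1 := by
  rw [Multiset.count_map]
  have heq : Multiset.filter (fun a => v = f a) (Finset.Icc 1 l).val
      = ((Finset.Icc 1 l).filter (fun a => v = f a)).val := (Finset.filter_val _ _).symm
  rw [heq]
  show ((Finset.Icc 1 l).filter (fun a => v = f a)).card ≤ 1
  refine Finset.card_le_one.mpr ?_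
  intro a ha b hb
  simp only [Finset.mem_filter, Finset.mem_Icc] at ha hb
  exact h a b ha.1.1 ha.1.2 hb.1.1 hb.1.2 ha.2.symm hb.2.symm

lemma exists_of_count_map_pos {f : ℕ → Seg} {l : ℕ} {v : Seg}
    (h : 1 ≤ (((Finset.Icc 1 l).val.map f).count v)) :
    ∃ j, 1 ≤ j ∧ j ≤ l ∧ f j = v := by
  have hv : v ∈ (Finset.Icc 1 l).val.map f := Multiset.count_pos.mp (by omega)
  rcases Multiset.mem_map.mp hv with ⟨j, hj, hfj⟩
  rw [Finset.mem_val, Finset.mem_Icc] at hj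
  exact ⟨j, hj.1, hj.2, hfj⟩

lemma count_map_Icc_pos (f : ℕ → Seg) {l : ℕ} {v : Seg} {j : ℕ}
    (hj1 : 1 ≤ j) (hjl : j ≤ l) (hfj : f j = v) :
    1 ≤ (((Finset.Icc 1 l).val.map f).count v) := by
  refine Multiset.count_pos.mpr (Multiset.mem_map.mpr ⟨j, ?_, hfj⟩)
  rw [Finset.mem_val, Finset.mem_Icc]; exact ⟨hj1, hjl⟩

lemma count_map_dual (A : Multiset Seg) (v : Seg) :
    (A.map Seg.dual).count v = A.count (Seg.dual v) := by
  conv_lhs => rw [show v = Seg.dual (Seg.dual v) from (Seg.dual_dual v).symm]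
  exact Multiset.count_map_eq_count' _ _ Seg.dual_inj _

/- ===================== basic facts about a BadInput ===================== -/

section BadFacts
variable {m : Multiset Seg} (hbad : BadInput m)
include hbad

lemma mem_dual_self {v : Seg} (hv : v ∈ m) : Seg.dual v ∈ m := by
  rw [← hbad.symm]
  exact Multiset.mem_map_of_mem _ hv

lemma count_dual_eq (v : Seg) : m.count (Seg.dual v) = m.count v := by
  conv_lhs => rw [← hbad.symm]
  rw [count_map_dual, Seg.dual_dual]

end BadFacts

/- ===================== facts about initial sequences ===================== -/

section ChainFacts
variable {m : Multiset Seg} {Δ : ℕ → Seg} {l : ℕ}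
variable (hbad : BadInput m) (hseq : IsInitSeqBad m Δ l)
include hbad hseq

lemma wf_mem {v : Seg} (hv : v ∈ m) : v.1 ≤ v.2 := (hbad.wf v hv).1

lemma end_le_E {v : Seg} (hv : v ∈ m) : v.2 ≤ (Δ 1).2 := hseq.first_max_end v hv

lemma beg_ge_negE {v : Seg} (hv : v ∈ m) : -(Δ 1).2 ≤ v.1 := by
  have h := hseq.first_max_end _ (mem_dual_self hbad hv)
  simp only [Seg.dual] at h
  omega

lemma end_parity {v : Seg} (hv : v ∈ m) : v.2 % 2 = (Δ 1).2 % 2 :=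
  hbad.parity v hv (Δ 1) hseq.first_mem

lemma beg_parity {v : Seg} (hv : v ∈ m) : v.1 % 2 = (Δ 1).2 % 2 := by
  have h := (hbad.wf v hv).2
  have h2 := end_parity hbad hseq hv
  omega

lemma chain_mem_end : ∀ j, 1 ≤ j → j ≤ l →
    Δ j ∈ m ∧ (Δ j).2 = (Δ 1).2 - 2 * ((j : ℤ) - 1) := by
  intro j
  induction j with
  | zero => omega
  | succ jj ih =>
    intro h1 h2
    rcases Nat.eq_or_lt_of_le h1 with he | hlt
    · constructor
      · rw [← he]; exact hseq.first_mem
      · rw [← he]; push_cast; ring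
    · have hjj1 : 1 ≤ jj := by omega
      have hjjl : jj < l := by omega
      obtain ⟨hm, hend⟩ := ih hjj1 (by omega)
      obtain ⟨hm2, _, hend2, _⟩ := hseq.succ jj hjj1 hjjl
      refine ⟨hm2, ?_⟩
      rw [hend2, hend]; push_cast; ring

lemma chain_mem (j : ℕ) (h1 : 1 ≤ j) (h2 : j ≤ l) : Δ j ∈ m :=
  (chain_mem_end hbad hseq j h1 h2).1

lemma chain_end (j : ℕ) (h1 : 1 ≤ j) (h2 : j ≤ l) :
    (Δ j).2 = (Δ 1).2 - 2 * ((j : ℤ) - 1) :=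
  (chain_mem_end hbad hseq j h1 h2).2

lemma chain_end_pin {i j : ℕ} (hi1 : 1 ≤ i) (hil : i ≤ l) (hj1 : 1 ≤ j) (hjl : j ≤ l)
    (he : (Δ i).2 = (Δ j).2) : i = j := by
  have h1 := chain_end hbad hseq i hi1 hil
  have h2 := chain_end hbad hseq j hj1 hjl
  omega

lemma chain_beg_step (j : ℕ) (h1 : 1 ≤ j) (h2 : j < l) :
    (Δ (j + 1)).1 ≤ (Δ j).1 - 2 := by
  obtain ⟨hm, hle, hend, _⟩ := hseq.succ j h1 h2
  have hp1 := beg_parity hbad hseq hm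
  have hp2 := beg_parity hbad hseq (chain_mem hbad hseq j h1 (by omega))
  rcases hle with h | ⟨h, h'⟩
  · omega
  · omega

lemma chain_beg_mono : ∀ i j, 1 ≤ i → i ≤ j → j ≤ l →
    (Δ j).1 ≤ (Δ i).1 - 2 * ((j : ℤ) - (i : ℤ)) := by
  intro i j
  induction j with
  | zero => omega
  | succ jj ih =>
    intro h1 h2 h3
    rcases Nat.eq_or_lt_of_le h2 with he | hlt
    · rw [he]; push_cast; omega
    · have hij : i ≤ jj := by omega
      have h4 := ih h1 hij (by omega)
      have h5 := chain_beg_step hbad hseq jj (by omega) (by omega)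
      push_cast
      push_cast at h4
      omega

lemma chain_beg_pin {i j : ℕ} (hi1 : 1 ≤ i) (hil : i ≤ l) (hj1 : 1 ≤ j) (hjl : j ≤ l)
    (he : (Δ i).1 = (Δ j).1) : i = j := by
  rcases Nat.lt_trichotomy i j with h | h | h
  · have := chain_beg_mono hbad hseq i j hi1 (by omega) hjl; omega
  · exact h
  · have := chain_beg_mono hbad hseq j i hj1 (by omega) hil; omega

/-- key multiplicity fact: a chain segment whose dual is also in the chain
has multiplicity at least 2. -/
lemma paired_count : ∀ i j, 1 ≤ i → i ≤ l → 1 ≤ j → j ≤ l →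
    Seg.dual (Δ i) = Δ j → 2 ≤ m.count (Δ j) := by
  have main : ∀ i j, 1 ≤ i → i ≤ l → 1 ≤ j → j ≤ l → i < j →
      Seg.dual (Δ i) = Δ j → 2 ≤ m.count (Δ j) := by
    intro i j hi1 hil hj1 hjl hij hd
    obtain ⟨jj, rfl⟩ : ∃ jj, j = jj + 1 := ⟨j - 1, by omega⟩
    obtain ⟨_, _, _, hcc⟩ := hseq.succ jj (by omega) (by omega)
    refine hcc ⟨i, hi1, by omega, ?_⟩
    rw [← hd, Seg.dual_dual]
  intro i j hi1 hil hj1 hjl hd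
  rcases Nat.lt_trichotomy i j with h | h | h
  · exact main i j hi1 hil hj1 hjl h hd
  · subst h
    have hc : (Δ i).1 + (Δ i).2 = 0 := by
      have h1 : -(Δ i).2 = (Δ i).1 := congrArg Prod.fst hd
      omega
    obtain ⟨c, hc2⟩ := hbad.evenCentered (Δ i) hc
    have hm : 1 ≤ m.count (Δ i) := Multiset.count_pos.mpr (chain_mem hbad hseq i hi1 hil)
    omega
  · have hd2 : Seg.dual (Δ j) = Δ i := by rw [← hd, Seg.dual_dual]
    have h2 := main j i hj1 hjl hi1 hil h hd2
    have h3 : m.count (Seg.dual (Δ j)) = m.count (Δ j) := count_dual_eq hbad _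
    rw [hd2] at h3
    omega

end ChainFacts

/- ===================== facts about mHashBad ===================== -/

section HashFacts
variable {m : Multiset Seg} {Δ : ℕ → Seg} {l : ℕ}
variable (hbad : BadInput m) (hseq : IsInitSeqBad m Δ l)
include hbad hseq

lemma map_dualtrim_eq :
    (seqM Δ l).map (fun Δ0 => Seg.dual (Seg.trimEnd Δ0))
      = ((seqM Δ l).map Seg.trimEnd).map Seg.dual := by
  rw [Multiset.map_map]; rfl

lemma cs_le_one (v : Seg) : (seqM Δ l).count v ≤ 1 := by
  refine count_map_Icc_le_one Δ l v ?_
  intro i j hi1 hil hj1 hjl hiv hjv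
  exact chain_end_pin hbad hseq hi1 hil hj1 hjl (by rw [hiv, hjv])

lemma cs_pos_iff (v : Seg) :
    1 ≤ (seqM Δ l).count v ↔ ∃ j, 1 ≤ j ∧ j ≤ l ∧ Δ j = v := by
  constructor
  · exact fun h => exists_of_count_map_pos h
  · rintro ⟨j, h1, h2, h3⟩; exact count_map_Icc_pos Δ h1 h2 h3

lemma seqM_map_trim_eq :
    (seqM Δ l).map Seg.trimEnd = (Finset.Icc 1 l).val.map (fun j => Seg.trimEnd (Δ j)) := by
  rw [seqM, Multiset.map_map]; rfl

lemma ct_le_one (v : Seg) : ((seqM Δ l).map Seg.trimEnd).count v ≤ 1 := by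
  rw [seqM_map_trim_eq hbad hseq]
  refine count_map_Icc_le_one _ l v ?_
  intro i j hi1 hil hj1 hjl hiv hjv
  have h1 : (Δ i).2 - 2 = v.2 := by rw [← hiv]; rfl
  have h2 : (Δ j).2 - 2 = v.2 := by rw [← hjv]; rfl
  exact chain_end_pin hbad hseq hi1 hil hj1 hjl (by omega)

lemma ct_pos_iff (v : Seg) :
    1 ≤ ((seqM Δ l).map Seg.trimEnd).count v ↔
      ∃ j, 1 ≤ j ∧ j ≤ l ∧ Seg.trimEnd (Δ j) = v := by
  rw [seqM_map_trim_eq hbad hseq]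
  constructor
  · exact fun h => exists_of_count_map_pos h
  · rintro ⟨j, h1, h2, h3⟩; exact count_map_Icc_pos _ h1 h2 h3

lemma mhash_count (v : Seg) : (mHashBad m Δ l).count v =
    (m.count v - ((seqM Δ l).count v + (seqM Δ l).count (Seg.dual v)))
      + (if v.1 ≤ v.2 then
          ((seqM Δ l).map Seg.trimEnd).count v
            + ((seqM Δ l).map Seg.trimEnd).count (Seg.dual v)
        else 0) := by
  rw [mHashBad, Multiset.count_add, Multiset.count_sub, Multiset.count_add,
    Multiset.count_filter]
  rw [count_map_dual]
  congr 1
  split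
  · rw [Multiset.count_add, map_dualtrim_eq hbad hseq, count_map_dual]
  · rfl

lemma SS_le : seqM Δ l + (seqM Δ l).map Seg.dual ≤ m := by
  refine Multiset.le_iff_count.mpr ?_
  intro v
  rw [Multiset.count_add, count_map_dual]
  have h1 := cs_le_one hbad hseq v
  have h2 := cs_le_one hbad hseq (Seg.dual v)
  rcases Nat.eq_zero_or_pos ((seqM Δ l).count v) with ha | ha
  · rcases Nat.eq_zero_or_pos ((seqM Δ l).count (Seg.dual v)) with hb | hb
    · omega
    · obtain ⟨j, hj1, hjl, hjv⟩ := (cs_pos_iff hbad hseq _).mp hb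
      have : v ∈ m := by
        have := mem_dual_self hbad (chain_mem hbad hseq j hj1 hjl)
        rwa [hjv, Seg.dual_dual] at this
      have := Multiset.count_pos.mpr this
      omega
  · obtain ⟨j, hj1, hjl, hjv⟩ := (cs_pos_iff hbad hseq _).mp ha
    rcases Nat.eq_zero_or_pos ((seqM Δ l).count (Seg.dual v)) with hb | hb
    · have : v ∈ m := hjv ▸ chain_mem hbad hseq j hj1 hjl
      have := Multiset.count_pos.mpr this
      omega
    · obtain ⟨i, hi1, hil, hiv⟩ := (cs_pos_iff hbad hseq _).mp hb
      have hd : Seg.dual (Δ i) = Δ j := by rw [hiv, Seg.dual_dual, hjv]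
      have := paired_count hbad hseq i j hi1 hil hj1 hjl hd
      rw [hjv] at this
      omega

lemma mhash_mem_cases {v : Seg} (hv : v ∈ mHashBad m Δ l) :
    (1 ≤ m.count v ∧
        (seqM Δ l).count v + (seqM Δ l).count (Seg.dual v) + 1 ≤ m.count v)
      ∨ (v.1 ≤ v.2 ∧
          ((∃ j, 1 ≤ j ∧ j ≤ l ∧ Seg.trimEnd (Δ j) = v)
            ∨ (∃ j, 1 ≤ j ∧ j ≤ l ∧ Seg.dual (Seg.trimEnd (Δ j)) = v))) := by
  have hc : 1 ≤ (mHashBad m Δ l).count v := Multiset.count_pos.mpr hv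
  rw [mhash_count hbad hseq] at hc
  by_cases hp : v.1 ≤ v.2
  · rw [if_pos hp] at hc
    rcases Nat.eq_zero_or_pos (((seqM Δ l).map Seg.trimEnd).count v) with ha | ha
    · rcases Nat.eq_zero_or_pos (((seqM Δ l).map Seg.trimEnd).count (Seg.dual v)) with hb | hb
      · left; omega
      · right
        refine ⟨hp, Or.inr ?_⟩
        obtain ⟨j, hj1, hjl, hjv⟩ := (ct_pos_iff hbad hseq _).mp hb
        exact ⟨j, hj1, hjl, by rw [hjv, Seg.dual_dual]⟩
    · right
      exact ⟨hp, Or.inl ((ct_pos_iff hbad hseq _).mp ha)⟩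
  · rw [if_neg hp] at hc
    left; omega

lemma t1_extract {v : Seg} (h2 : 2 ≤ (mHashBad m Δ l).count v) :
    1 ≤ m.count v ∨ ∃ j, 1 ≤ j ∧ j ≤ l ∧ Seg.dual (Seg.trimEnd (Δ j)) = v := by
  rw [mhash_count hbad hseq] at h2
  have h1 := ct_le_one hbad hseq v
  rcases Nat.eq_zero_or_pos (m.count v) with ha | ha
  · right
    have hb : 1 ≤ ((seqM Δ l).map Seg.trimEnd).count (Seg.dual v) := by
      by_contra hcon
      push_neg at hcon
      split at h2 <;> omega
    obtain ⟨j, hj1, hjl, hjv⟩ := (ct_pos_iff hbad hseq _).mp hb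
    exact ⟨j, hj1, hjl, by rw [hjv, Seg.dual_dual]⟩
  · left; exact ha

lemma mhash_end_le {v : Seg} (hv : v ∈ mHashBad m Δ l) : v.2 ≤ (Δ 1).2 := by
  rcases mhash_mem_cases hbad hseq hv with ⟨h1, _⟩ | ⟨_, ⟨j, hj1, hjl, hjv⟩ | ⟨j, hj1, hjl, hjv⟩⟩
  · exact end_le_E hbad hseq (Multiset.count_pos.mp (by omega))
  · have he := chain_end hbad hseq j hj1 hjl
    have : v.2 = (Δ j).2 - 2 := by rw [← hjv]; rfl
    omega
  · have hb := beg_ge_negE hbad hseq (chain_mem hbad hseq j hj1 hjl)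
    have : v.2 = -(Δ j).1 := by rw [← hjv]; rfl
    omega

lemma mhash_parity {v : Seg} (hv : v ∈ mHashBad m Δ l) :
    v.1 % 2 = (Δ 1).2 % 2 ∧ v.2 % 2 = (Δ 1).2 % 2 := by
  rcases mhash_mem_cases hbad hseq hv with ⟨h1, _⟩ | ⟨_, ⟨j, hj1, hjl, hjv⟩ | ⟨j, hj1, hjl, hjv⟩⟩
  · have hm : v ∈ m := Multiset.count_pos.mp (by omega)
    exact ⟨beg_parity hbad hseq hm, end_parity hbad hseq hm⟩
  all_goals {
    have hm := chain_mem hbad hseq j hj1 hjl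
    have h1 := beg_parity hbad hseq hm
    have h2 := end_parity hbad hseq hm
    have hfst := congrArg Prod.fst hjv
    have hsnd := congrArg Prod.snd hjv
    simp only [Seg.dual, Seg.trimEnd] at hfst hsnd
    have e1 : v.1 = (Δ j).1 ∨ v.1 = 2 - (Δ j).2 := by
      first
        | exact Or.inl (by omega)
        | exact Or.inr (by omega)
    have e2 : v.2 = (Δ j).2 - 2 ∨ v.2 = -(Δ j).1 := by
      first
        | exact Or.inl (by omega)
        | exact Or.inr (by omega)
    constructor
    · rcases e1 with e | e <;> omega
    · rcases e2 with e | e <;> omega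
  }

lemma mhash_badinput : BadInput (mHashBad m Δ l) := by
  constructor
  · intro v hv
    have hp := mhash_parity hbad hseq hv
    constructor
    · rcases mhash_mem_cases hbad hseq hv with ⟨h1, _⟩ | ⟨h1, _⟩
      · exact (hbad.wf v (Multiset.count_pos.mp (by omega))).1
      · exact h1
    · omega
  · refine Multiset.ext.mpr ?_
    intro v
    rw [count_map_dual, mhash_count hbad hseq, mhash_count hbad hseq, Seg.dual_dual]
    rw [count_dual_eq hbad]
    have hiff : (Seg.dual v).1 ≤ (Seg.dual v).2 ↔ v.1 ≤ v.2 := by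
      simp only [Seg.dual]; omega
    by_cases hp : v.1 ≤ v.2
    · rw [if_pos hp, if_pos (hiff.mpr hp)]; omega
    · rw [if_neg hp, if_neg (fun h => hp (hiff.mp h))]; omega
  · intro v1 h1 v2 h2
    have := (mhash_parity hbad hseq h1).2
    have := (mhash_parity hbad hseq h2).2
    omega
  · intro v hc
    have hdv : Seg.dual v = v := Prod.ext (by simp [Seg.dual]; omega) (by simp [Seg.dual]; omega)
    rw [mhash_count hbad hseq, hdv]
    obtain ⟨c, hcm⟩ := hbad.evenCentered v hc
    have hSS := Multiset.le_iff_count.mp (SS_le hbad hseq) v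
    rw [Multiset.count_add, count_map_dual, hdv] at hSS
    by_cases hp : v.1 ≤ v.2
    · rw [if_pos hp]
      exact ⟨(c - (seqM Δ l).count v) + ((seqM Δ l).map Seg.trimEnd).count v, by omega⟩
    · rw [if_neg hp]
      exact ⟨c - (seqM Δ l).count v, by omega⟩

end HashFacts

/- ===================== uniqueness of the initial sequence ===================== -/

section Unique
variable {m : Multiset Seg} {Δ Δ' : ℕ → Seg} {l l' : ℕ}

lemma succbad_congr (hag : ∀ i, 1 ≤ i → i ≤ j → Δ i = Δ' i) (hj : 1 ≤ j) {Λ : Seg}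
    (h : SuccBad m Δ j Λ) : SuccBad m Δ' j Λ := by
  obtain ⟨h1, h2, h3, h4⟩ := h
  have hj' := hag j hj le_rfl
  refine ⟨h1, by rwa [← hj'], by rwa [← hj'], ?_⟩
  rintro ⟨i, hi1, hij, hd⟩
  exact h4 ⟨i, hi1, hij, by rw [hd, ← hag i hi1 hij]⟩

lemma initseq_unique (h1 : IsInitSeqBad m Δ l) (h2 : IsInitSeqBad m Δ' l') :
    l = l' ∧ ∀ j, 1 ≤ j → j ≤ l → Δ j = Δ' j := by
  have key : ∀ j, 1 ≤ j → j ≤ l → j ≤ l' → Δ j = Δ' j := by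
    intro j
    induction j using Nat.strong_induction_on with
    | _ j ih =>
      intro hj1 hjl hjl'
      rcases Nat.eq_or_lt_of_le hj1 with he | hgt
      · rw [← he]
        have e1 : (Δ 1).2 = (Δ' 1).2 :=
          le_antisymm (h2.first_max_end _ h1.first_mem) (h1.first_max_end _ h2.first_mem)
        exact seg_le_antisymm
          (h2.first_max _ h1.first_mem e1)
          (h1.first_max _ h2.first_mem e1.symm)
      · obtain ⟨jj, rfl⟩ : ∃ jj, j = jj + 1 := ⟨j - 1, by omega⟩
        have hag : ∀ i, 1 ≤ i → i ≤ jj → Δ i = Δ' i := by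
          intro i hi1 hijj
          exact ih i (by omega) hi1 (by omega) (by omega)
        have hs1 : SuccBad m Δ' jj (Δ (jj + 1)) :=
          succbad_congr hag (by omega) (h1.succ jj (by omega) (by omega))
        have hs2 : SuccBad m Δ jj (Δ' (jj + 1)) :=
          succbad_congr (fun i a b => (hag i a b).symm) (by omega) (h2.succ jj (by omega) (by omega))
        exact seg_le_antisymm
          (h2.succ_max jj (by omega) (by omega) _ hs1)
          (h1.succ_max jj (by omega) (by omega) _ hs2)
  have hll : l = l' := by
    rcases Nat.lt_trichotomy l l' with h | h | h
    · exfalso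
      have hs := h2.succ l h1.one_le h
      have hag : ∀ i, 1 ≤ i → i ≤ l → Δ' i = Δ i :=
        fun i a b => (key i a b (by omega)).symm
      exact h1.last _ (succbad_congr hag h1.one_le hs)
    · exact h
    · exfalso
      have hs := h1.succ l' h2.one_le h
      have hag : ∀ i, 1 ≤ i → i ≤ l' → Δ i = Δ' i :=
        fun i a b => key i a (by omega) b
      exact h2.last _ (succbad_congr hag h2.one_le hs)
  exact ⟨hll, fun j a b => key j a b (by omega)⟩

end Unique

/- ===================== the crux: comparing initial sequences of m and m# ===================== -/

/-- The invariant: the beginning of the `t`-th segment of the initial sequence of `m#`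
exceeds that of the `t`-th segment of the initial sequence of `m` by at most 2, and in
the case of equality the `t`-th segment of the initial sequence of `m` is dual to a
segment of the sequence. -/
def Inv (Δ Γ : ℕ → Seg) (l t : ℕ) : Prop :=
  (Γ t).1 ≤ (Δ t).1 + 2 ∧
    ((Γ t).1 = (Δ t).1 + 2 → ∃ i, 1 ≤ i ∧ i ≤ l ∧ Seg.dual (Δ i) = Δ t)

section Crux
variable {m : Multiset Seg} {Δ : ℕ → Seg} {l : ℕ} {Γ : ℕ → Seg} {n : ℕ}
variable (hbad : BadInput m) (hseq : IsInitSeqBad m Δ l)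
variable (hseq' : IsInitSeqBad (mHashBad m Δ l) Γ n)
include hbad hseq hseq'

lemma casc_aux (k s : ℕ) (hs1 : 1 ≤ s) (hsk : s ≤ k) (hkl : k ≤ l) (hkn : k ≤ n)
    (IH : ∀ t, 1 ≤ t → t ≤ k → Inv Δ Γ l t)
    (hβk : (Γ k).1 = (Δ k).1 + 2)
    (hstair : ∀ t, s ≤ t → t ≤ k → (Δ t).1 = (Δ k).1 + 2 * ((k : ℤ) - (t : ℤ))) :
    (Γ s).1 = (Δ s).1 + 2 := by
  have hbad' := mhash_badinput hbad hseq
  have aux : ∀ d s', s ≤ s' → s' + d = k → (Γ s').1 = (Δ s').1 + 2 := by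
    intro d
    induction d with
    | zero =>
      intro s' h1 h2
      have h3 : s' = k := by omega
      rw [h3]; exact hβk
    | succ dd ih2 =>
      intro s' h1 h2
      have hnext := ih2 (s' + 1) (by omega) (by omega)
      have hstep := chain_beg_step hbad' hseq' s' (by omega) (by omega)
      have hB1 := hstair s' h1 (by omega)
      have hB2 := hstair (s' + 1) (by omega) (by omega)
      have hinv := (IH s' (by omega) (by omega)).1
      push_cast at hB1 hB2
      omega
  exact aux (k - s) s le_rfl (by omega)

lemma shared_C (k r : ℕ) (hk1 : 1 ≤ k) (hkl : k ≤ l) (hkn : k < n)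
    (IH : ∀ t, 1 ≤ t → t ≤ k → Inv Δ Γ l t)
    (hr1 : 1 ≤ r) (hrk : r + 1 ≤ k) (hsl : r + 1 ≤ l)
    (hsd : Seg.dual (Δ (r + 1)) = Δ k)
    (htight : (Δ r).1 = (Δ (r + 1)).1 + 2)
    (hβv : (Γ (k + 1)).1 = (Δ k).1)
    (hcascS : (Γ (r + 1)).1 = (Δ (r + 1)).1 + 2) :
    k < l ∧ Inv Δ Γ l (k + 1) := by
  have hbad' := mhash_badinput hbad hseq
  -- pair equations
  have hd1 : -(Δ (r+1)).2 = (Δ k).1 := congrArg Prod.fst hsd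
  have hd2 : -(Δ (r+1)).1 = (Δ k).2 := congrArg Prod.snd hsd
  have eS := chain_end hbad hseq (r+1) (by omega) hsl
  have eR := chain_end hbad hseq r hr1 (by omega)
  have eK := chain_end hbad hseq k hk1 hkl
  -- β r is too big, so Inv at r forces equality and a dual pair
  have hstepβ := chain_beg_step hbad' hseq' r hr1 (by omega)
  have hinvr := IH r hr1 (by omega)
  have hβr : (Γ r).1 = (Δ r).1 + 2 := by
    have := hinvr.1
    omega
  obtain ⟨t', ht1, htl, htd⟩ := hinvr.2 hβr
  -- pin t' = k + 1
  have htd2 : -(Δ t').2 = (Δ r).1 := congrArg Prod.fst htd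
  have eT := chain_end hbad hseq t' ht1 htl
  have ht'eq : t' = k + 1 := by omega
  have hkl2 : k < l := by omega
  have hwit : Seg.dual (Δ r) = Δ (k + 1) := by
    rw [ht'eq] at htd
    have := congrArg Seg.dual htd
    rw [Seg.dual_dual] at this
    exact this.symm
  have hB : (Δ (k+1)).1 = (Δ k).1 - 2 := by
    have : (Δ (k+1)).1 = -(Δ r).2 := (congrArg Prod.fst hwit).symm
    omega
  refine ⟨hkl2, by omega, fun _ => ⟨r, hr1, by omega, hwit⟩⟩

end Crux

section Crux2
variable {m : Multiset Seg} {Δ : ℕ → Seg} {l : ℕ} {Γ : ℕ → Seg} {n : ℕ}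
variable (hbad : BadInput m) (hseq : IsInitSeqBad m Δ l)
variable (hseq' : IsInitSeqBad (mHashBad m Δ l) Γ n)
include hbad hseq hseq'

lemma shared_main (k : ℕ) (hk1 : 1 ≤ k) (hkl : k ≤ l) (hkn : k < n)
    (IH : ∀ t, 1 ≤ t → t ≤ k → Inv Δ Γ l t)
    (hE : (Γ 1).2 = (Δ 1).2)
    (hβv : (Γ (k + 1)).1 = (Δ k).1)
    (hβk : (Γ k).1 = (Δ k).1 + 2)
    (hPk : ∃ s, 1 ≤ s ∧ s ≤ l ∧ Seg.dual (Δ s) = Δ k) :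
    k < l ∧ Inv Δ Γ l (k + 1) := by
  have hbad' := mhash_badinput hbad hseq
  obtain ⟨s, hs1, hsl, hsd⟩ := hPk
  have hd1 : -(Δ s).2 = (Δ k).1 := congrArg Prod.fst hsd
  have hd2 : -(Δ s).1 = (Δ k).2 := congrArg Prod.snd hsd
  have eS := chain_end hbad hseq s hs1 hsl
  have eK := chain_end hbad hseq k hk1 hkl
  have hvend' := chain_end hbad' hseq' (k+1) (by omega) (by omega)
  have hvend : (Γ (k+1)).2 = (Δ k).2 - 2 := by
    rw [hE] at hvend'; push_cast at hvend'; omega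
  rcases Nat.lt_or_ge k s with hks | hsk
  · -- CASE A : k < s
    have hkl2 : k < l := by omega
    have hstep := chain_beg_step hbad hseq k hk1 hkl2
    have hmono : (Δ s).1 ≤ (Δ (k+1)).1 - 2*((s:ℤ) - ((k:ℤ)+1)) := by
      have := chain_beg_mono hbad hseq (k+1) s (by omega) (by omega) hsl
      push_cast at this; omega
    obtain ⟨r, hr⟩ : ∃ r, s = r + 1 := ⟨s - 1, by omega⟩
    subst hr
    have eR := chain_end hbad hseq r (by omega) (by omega)
    have eK1 := chain_end hbad hseq (k+1) (by omega) (by omega)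
    have hmono2 : (Δ (r+1)).1 ≤ (Δ r).1 - 2 := chain_beg_step hbad hseq r (by omega) (by omega)
    push_cast at eR eK1 eS eK hmono
    have hBr : (Δ r).1 = (Δ (r+1)).1 + 2 ∧ (Δ (k+1)).1 = (Δ k).1 - 2 := by
      rcases Nat.lt_or_ge k r with h | h
      · have hmono4 := chain_beg_mono hbad hseq (k+1) r (by omega) (by omega) (by omega)
        push_cast at hmono4
        constructor <;> omega
      · have hrk : r = k := by omega
        subst hrk
        constructor <;> omega
    have hwit : Seg.dual (Δ r) = Δ (k+1) := by
      refine Prod.ext ?_ ?_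
      · show -(Δ r).2 = (Δ (k+1)).1
        omega
      · show -(Δ r).1 = (Δ (k+1)).2
        omega
    exact ⟨hkl2, ⟨by omega, fun _ => ⟨r, by omega, by omega, hwit⟩⟩⟩
  · -- CASE B : s ≤ k
    have hstair : ∀ t, s ≤ t → t ≤ k → (Δ t).1 = (Δ k).1 + 2 * ((k : ℤ) - (t : ℤ)) := by
      intro t h1 h2
      have m1 := chain_beg_mono hbad hseq s t hs1 h1 (by omega)
      have m2 := chain_beg_mono hbad hseq t k (by omega) h2 hkl
      push_cast at m1 m2 eS eK
      omega
    have hcascS := casc_aux hbad hseq hseq' k s hs1 hsk hkl (by omega) IH hβk hstair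
    have hdv1 : (Seg.dual (Γ (k+1))).1 = (Δ s).1 + 2 := by
      show -(Γ (k+1)).2 = (Δ s).1 + 2
      omega
    have hdv2 : (Seg.dual (Γ (k+1))).2 = (Δ s).2 := by
      show -(Γ (k+1)).1 = (Δ s).2
      omega
    by_cases hvm : 1 ≤ m.count (Γ (k+1))
    · have hWm : Seg.dual (Γ (k+1)) ∈ m :=
        mem_dual_self hbad (Multiset.count_pos.mp (by omega))
      rcases Nat.eq_or_lt_of_le hs1 with hseq1 | hs2
      · exfalso
        have hend : (Seg.dual (Γ (k+1))).2 = (Δ 1).2 := by rw [hdv2, ← hseq1]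
        have hle := hseq.first_max _ hWm hend
        rcases hle with h | ⟨h, h'⟩
        · rw [hdv1, ← hseq1] at h; omega
        · rw [hdv1, ← hseq1] at h; omega
      · obtain ⟨r, hr⟩ : ∃ r, s = r + 1 := ⟨s - 1, by omega⟩
        subst hr
        by_cases htight : (Δ r).1 = (Δ (r+1)).1 + 2
        · exact shared_C hbad hseq hseq' k r hk1 hkl hkn IH (by omega) (by omega) hsl hsd
            htight hβv hcascS
        · exfalso
          have eR := chain_end hbad hseq r (by omega) (by omega)
          have hstepB := chain_beg_step hbad hseq r (by omega) (by omega)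
          have hpr := beg_parity hbad hseq (chain_mem hbad hseq r (by omega) (by omega))
          have hps := beg_parity hbad hseq (chain_mem hbad hseq (r+1) (by omega) hsl)
          have hsb : SuccBad m Δ r (Seg.dual (Γ (k+1))) := by
            refine ⟨hWm, Or.inl (by omega), by omega, ?_⟩
            rintro ⟨t, ht1, htr, hdt⟩
            rw [Seg.dual_dual] at hdt
            exfalso
            have eT := chain_end hbad hseq t ht1 (by omega)
            have hTe : (Δ t).2 = (Γ (k+1)).2 := by rw [hdt]
            push_cast at eT eR eS eK
            omega
          have hsm := hseq.succ_max r (by omega) (by omega) _ hsb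
          rcases hsm with h | ⟨h, h'⟩
          · omega
          · omega
    · have hvcc := (hseq'.succ k hk1 hkn).2.2.2
      have hGs : Seg.dual (Γ (k+1)) = Γ s := by
        have eGs := chain_end hbad' hseq' s hs1 (by omega)
        rw [hE] at eGs
        refine Prod.ext ?_ ?_
        · rw [hdv1]; omega
        · rw [hdv2]; omega
      have h2c := hvcc ⟨s, hs1, by omega, hGs⟩
      rcases t1_extract hbad hseq h2c with h | ⟨j, hj1, hjl, hjv⟩
      · exact absurd h hvm
      · have hjv1 : -((Δ j).2 - 2) = (Γ (k+1)).1 := congrArg Prod.fst hjv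
        have hjv2 : -(Δ j).1 = (Γ (k+1)).2 := congrArg Prod.snd hjv
        have eJ := chain_end hbad hseq j hj1 hjl
        have hs2 : 2 ≤ s := by
          by_contra hcon
          have hs1' : s = 1 := by omega
          subst hs1'
          push_cast at eJ eS eK
          omega
        obtain ⟨r, hr⟩ : ∃ r, s = r + 1 := ⟨s - 1, by omega⟩
        subst hr
        have eR := chain_end hbad hseq r (by omega) (by omega)
        push_cast at eJ eR eS eK
        have hjr : j = r := by omega
        subst hjr
        have htight : (Δ j).1 = (Δ (j+1)).1 + 2 := by omega
        exact shared_C hbad hseq hseq' k j hk1 hkl hkn IH (by omega) (by omega) hsl hsd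
          htight hβv hcascS

end Crux2

section Crux3
variable {m : Multiset Seg} {Δ : ℕ → Seg} {l : ℕ} {Γ : ℕ → Seg} {n : ℕ}
variable (hbad : BadInput m) (hseq : IsInitSeqBad m Δ l)
variable (hseq' : IsInitSeqBad (mHashBad m Δ l) Γ n)
include hbad hseq hseq'

lemma step_main (k : ℕ) (hk1 : 1 ≤ k) (hkl : k ≤ l) (hkn : k < n)
    (IH : ∀ t, 1 ≤ t → t ≤ k → Inv Δ Γ l t)
    (hE : (Γ 1).2 = (Δ 1).2) :
    k < l ∧ Inv Δ Γ l (k + 1) := by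
  have hbad' := mhash_badinput hbad hseq
  obtain ⟨hvmem, hvle, -, -⟩ := hseq'.succ k hk1 hkn
  have eK := chain_end hbad hseq k hk1 hkl
  have eGk := chain_end hbad' hseq' k hk1 (by omega)
  rw [hE] at eGk
  have eGk1 := chain_end hbad' hseq' (k+1) (by omega) (by omega)
  rw [hE] at eGk1
  have hvend : (Γ (k+1)).2 = (Δ k).2 - 2 := by push_cast at eGk1 eK ⊢; omega
  have hstepβ : (Γ (k+1)).1 ≤ (Γ k).1 - 2 := chain_beg_step hbad' hseq' k hk1 hkn
  have hinvk := IH k hk1 le_rfl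
  rcases mhash_mem_cases hbad hseq hvmem with ⟨hc1, hc2⟩ |
    ⟨hwf, ⟨j, hj1, hjl, hjv⟩ | ⟨j, hj1, hjl, hjv⟩⟩
  · -- source : leftover member of m
    by_cases hlt : (Γ (k+1)).1 < (Δ k).1
    · have hsb : SuccBad m Δ k (Γ (k+1)) := by
        refine ⟨Multiset.count_pos.mp (by omega), Or.inl hlt, by omega, ?_⟩
        rintro ⟨t, ht1, htk, hdt⟩
        have hv : 1 ≤ (seqM Δ l).count (Seg.dual (Γ (k+1))) :=
          (cs_pos_iff hbad hseq _).mpr ⟨t, ht1, by omega, hdt.symm⟩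
        omega
      rcases Nat.lt_or_ge k l with hkl2 | hkl2
      · have hsm := hseq.succ_max k hk1 hkl2 _ hsb
        have eK1 := chain_end hbad hseq (k+1) (by omega) (by omega)
        have hle2 : (Γ (k+1)).1 ≤ (Δ (k+1)).1 := by
          rcases hsm with h | ⟨h, h'⟩
          · omega
          · push_cast at eK eK1; omega
        exact ⟨hkl2, ⟨by omega, fun hfalse => absurd hfalse (by omega)⟩⟩
      · exfalso
        have hkeq : k = l := by omega
        subst hkeq
        exact hseq.last _ hsb
    · have hβv : (Γ (k+1)).1 = (Δ k).1 := by
        have := hinvk.1; omega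
      have hβk : (Γ k).1 = (Δ k).1 + 2 := by
        have := hinvk.1; omega
      exact shared_main hbad hseq hseq' k hk1 hkl hkn IH hE hβv hβk (hinvk.2 hβk)
  · -- source : Δ j ⁻
    have hjv1 := congrArg Prod.fst hjv
    have hjv2 := congrArg Prod.snd hjv
    simp only [Seg.trimEnd] at hjv1 hjv2
    have eJ := chain_end hbad hseq j hj1 hjl
    have hjk : j = k := by push_cast at eJ eK; omega
    rw [hjk] at hjv1 hjv2
    have hβv : (Γ (k+1)).1 = (Δ k).1 := hjv1.symm
    have hlt : (Δ k).1 < (Γ k).1 := by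
      rcases hvle with h | ⟨h, h'⟩
      · omega
      · push_cast at eGk; omega
    have hβk : (Γ k).1 = (Δ k).1 + 2 := by
      have h0 := hinvk.1
      have hp1 := (mhash_parity hbad hseq (chain_mem hbad' hseq' k hk1 (by omega))).1
      have hp2 := beg_parity hbad hseq (chain_mem hbad hseq k hk1 hkl)
      omega
    exact shared_main hbad hseq hseq' k hk1 hkl hkn IH hE hβv hβk (hinvk.2 hβk)
  · -- source : ⁻(Δ j ∨)
    have hjv1 : -((Δ j).2 - 2) = (Γ (k+1)).1 := congrArg Prod.fst hjv
    have hjv2 : -(Δ j).1 = (Γ (k+1)).2 := congrArg Prod.snd hjv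
    have eJ := chain_end hbad hseq j hj1 hjl
    have hWm : Seg.dual (Δ j) ∈ m := mem_dual_self hbad (chain_mem hbad hseq j hj1 hjl)
    have hW1 : (Seg.dual (Δ j)).1 = -(Δ j).2 := rfl
    have hW2 : (Seg.dual (Δ j)).2 = -(Δ j).1 := rfl
    by_cases hcc : j ≤ k ∧ m.count (Seg.dual (Δ j)) ≤ 1
    · exfalso
      have hcd : m.count (Seg.dual (Δ j)) = m.count (Δ j) := count_dual_eq hbad _
      rcases Nat.eq_or_lt_of_le hcc.1 with hjk | hjk
      · subst hjk
        have hβk2 : (Γ j).1 = (Δ j).1 + 2 := by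
          have := hinvk.1; omega
        obtain ⟨t, ht1, htl, htd⟩ := hinvk.2 hβk2
        have := paired_count hbad hseq t j ht1 htl hj1 hjl htd
        omega
      · have hmono := chain_beg_mono hbad' hseq' (j+1) (k+1) (by omega) (by omega) (by omega)
        have eGj1 := chain_end hbad' hseq' (j+1) (by omega) (by omega)
        rw [hE] at eGj1
        have hstepj : (Γ (j+1)).1 ≤ (Γ j).1 - 2 := chain_beg_step hbad' hseq' j hj1 (by omega)
        have hinvj1 := (IH (j+1) (by omega) (by omega)).1
        have hinvj := IH j hj1 (by omega)
        have eJ1 := chain_end hbad hseq (j+1) (by omega) (by omega)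
        have hBj1 := chain_beg_step hbad hseq j hj1 (by omega)
        push_cast at eJ eK eJ1 hmono
        have hβj : (Γ j).1 = (Δ j).1 + 2 := by
          have := hinvj.1; omega
        obtain ⟨t, ht1, htl, htd⟩ := hinvj.2 hβj
        have := paired_count hbad hseq t j ht1 htl hj1 hjl htd
        omega
    · push_neg at hcc
      have hsb : SuccBad m Δ k (Seg.dual (Δ j)) := by
        refine ⟨hWm, Or.inl ?_, by omega, ?_⟩
        · have := hinvk.1; omega
        · rintro ⟨t, ht1, htk, hdt⟩
          rw [Seg.dual_dual] at hdt
          have eT := chain_end hbad hseq t ht1 (by omega)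
          have hTe : (Δ t).2 = (Δ j).2 := by rw [hdt]
          have htj : t = j := by push_cast at eT eJ; omega
          subst htj
          have := hcc (by omega)
          omega
      rcases Nat.lt_or_ge k l with hkl2 | hkl2
      · have hsm := hseq.succ_max k hk1 hkl2 _ hsb
        have eK1 := chain_end hbad hseq (k+1) (by omega) (by omega)
        have hle2 : (Seg.dual (Δ j)).1 ≤ (Δ (k+1)).1 := by
          rcases hsm with h | ⟨h, h'⟩
          · omega
          · push_cast at eK eK1; omega
        refine ⟨hkl2, ⟨by omega, fun heq => ⟨j, hj1, hjl, ?_⟩⟩⟩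
        refine Prod.ext ?_ ?_
        · show -(Δ j).2 = (Δ (k+1)).1
          omega
        · show -(Δ j).1 = (Δ (k+1)).2
          push_cast at eK eK1; omega
      · exfalso
        have hkeq : k = l := by omega
        subst hkeq
        exact hseq.last _ hsb

end Crux3

section Crux4
variable {m : Multiset Seg} {Δ : ℕ → Seg} {l : ℕ} {Γ : ℕ → Seg} {n : ℕ}
variable (hbad : BadInput m) (hseq : IsInitSeqBad m Δ l)
variable (hseq' : IsInitSeqBad (mHashBad m Δ l) Γ n)
include hbad hseq hseq'

lemma base_inv (hE : (Γ 1).2 = (Δ 1).2) : Inv Δ Γ l 1 := by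
  have hbad' := mhash_badinput hbad hseq
  have hvmem := hseq'.first_mem
  rcases mhash_mem_cases hbad hseq hvmem with ⟨hc1, hc2⟩ |
    ⟨hwf, ⟨j, hj1, hjl, hjv⟩ | ⟨j, hj1, hjl, hjv⟩⟩
  · have hle := hseq.first_max _ (Multiset.count_pos.mp (by omega)) hE
    rcases hle with h | ⟨h, h'⟩
    · exact ⟨by omega, fun hc => absurd hc (by omega)⟩
    · exact ⟨by omega, fun hc => absurd hc (by omega)⟩
  · exfalso
    have hjv2 := congrArg Prod.snd hjv
    simp only [Seg.trimEnd] at hjv2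
    have eJ := chain_end hbad hseq j hj1 hjl
    push_cast at eJ
    omega
  · have hjv1 := congrArg Prod.fst hjv
    have hjv2 := congrArg Prod.snd hjv
    simp only [Seg.trimEnd, Seg.dual] at hjv1 hjv2
    have eJ := chain_end hbad hseq j hj1 hjl
    have hWm : Seg.dual (Δ j) ∈ m := mem_dual_self hbad (chain_mem hbad hseq j hj1 hjl)
    have hW1 : (Seg.dual (Δ j)).1 = -(Δ j).2 := rfl
    have hW2 : (Seg.dual (Δ j)).2 = -(Δ j).1 := rfl
    have hend : (Seg.dual (Δ j)).2 = (Δ 1).2 := by omega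
    have hle := hseq.first_max _ hWm hend
    constructor
    · rcases hle with h | ⟨h, h'⟩
      · omega
      · omega
    · intro heq
      refine ⟨j, hj1, hjl, ?_⟩
      have h1B : (Seg.dual (Δ j)).1 = (Δ 1).1 := by
        rcases hle with h | ⟨h, h'⟩
        · omega
        · omega
      refine Prod.ext ?_ ?_
      · rw [hW1]; omega
      · rw [hW2]; omega

/-- The key comparison: if the initial sequence of `m#` starts at the same maximal
end as that of `m`, then it is not longer. -/
lemma crux (hE : (Γ 1).2 = (Δ 1).2) : n ≤ l := by
  by_contra hcon
  push_neg at hcon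
  have inv_all : ∀ k, 1 ≤ k → k ≤ l → Inv Δ Γ l k := by
    intro k
    induction k using Nat.strong_induction_on with
    | _ k ih =>
      intro hk1 hkl
      rcases Nat.eq_or_lt_of_le hk1 with he | hgt
      · rw [← he]; exact base_inv hbad hseq hseq' hE
      · obtain ⟨kk, rfl⟩ : ∃ kk, k = kk + 1 := ⟨k - 1, by omega⟩
        exact (step_main hbad hseq hseq' kk (by omega) (by omega) (by omega)
          (fun t ht1 htk => ih t (by omega) ht1 (by omega)) hE).2
  have := (step_main hbad hseq hseq' l hseq.one_le le_rfl (by omega) (fun t a b => inv_all t a b) hE).1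
  omega

end Crux4

/- ===================== assembling the main theorem ===================== -/

lemma isad_inv {a d : Multiset Seg} (h : IsADBad a d) :
    d = 0 ∨ ∃ (Δh : ℕ → Seg) (lh : ℕ), IsInitSeqBad a Δh lh := by
  cases h with
  | zero => exact Or.inl rfl
  | step hm hs hr => exact Or.inr ⟨_, _, hs⟩

lemma admain : ∀ {m d : Multiset Seg}, IsADBad m d → BadInput m →
    ∀ (Δ : ℕ → Seg) (l : ℕ), IsInitSeqBad m Δ l →
    ∀ Δ0 ∈ d, Δ0.2 ≤ (Δ 1).2 ∧
      (Δ0.2 = (Δ 1).2 → Δ0.2 - Δ0.1 ≤ (Δ 1).2 - (Δ l).2) := by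
  intro m d had
  induction had with
  | zero =>
    intro hbad Δ l hseq Δ0 h0
    simp at h0
  | @step m Δc lc d' hm hseqc hrec ih =>
    intro hbad Δ l hseq Δ0 h0
    obtain ⟨hll, hvals⟩ := initseq_unique hseqc hseq
    subst hll
    have hc1 : Δc 1 = Δ 1 := hvals 1 le_rfl hseqc.one_le
    have hcl : Δc lc = Δ lc := hvals lc hseqc.one_le le_rfl
    have hmemL := chain_mem hbad hseqc lc hseqc.one_le le_rfl
    have hbeg := beg_ge_negE hbad hseqc hmemL
    have hwfL := wf_mem hbad hseqc hmemL
    rcases Multiset.mem_add.mp h0 with h1 | h2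
    · simp only [mOneBad, Multiset.insert_eq_cons, Multiset.mem_cons,
        Multiset.mem_singleton] at h1
      have hc1' : (Δc 1).2 = (Δ 1).2 := by rw [hc1]
      have hcl' : (Δc lc).2 = (Δ lc).2 := by rw [hcl]
      rcases h1 with rfl | rfl
      · constructor
        · show (Δc 1).2 ≤ (Δ 1).2
          omega
        · intro _
          show (Δc 1).2 - (Δc lc).2 ≤ (Δ 1).2 - (Δ lc).2
          omega
      · constructor
        · show -(Δc lc).2 ≤ (Δ 1).2
          omega
        · intro hE0
          have hE0' : -(Δc lc).2 = (Δ 1).2 := hE0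
          show -(Δc lc).2 - -(Δc 1).2 ≤ (Δ 1).2 - (Δ lc).2
          omega
    · have hbadh : BadInput (mHashBad m Δc lc) := mhash_badinput hbad hseqc
      rcases isad_inv hrec with rfl | ⟨Δh, lh, hseqh⟩
      · simp at h2
      · have hres := ih hbadh Δh lh hseqh Δ0 h2
        have hEh : (Δh 1).2 ≤ (Δc 1).2 := mhash_end_le hbad hseqc hseqh.first_mem
        have hc1' : (Δc 1).2 = (Δ 1).2 := by rw [hc1]
        constructor
        · omega
        · intro hE0
          have hEeq : (Δh 1).2 = (Δc 1).2 := by omega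
          have hlh := crux hbad hseqc hseqh hEeq
          have eH := chain_end hbadh hseqh lh hseqh.one_le le_rfl
          have eL := chain_end hbad hseqc lc hseqc.one_le le_rfl
          have hres2 := hres.2 (by omega)
          have hcl' : (Δc lc).2 = (Δ lc).2 := by rw [hcl]
          push_cast at eH eL
          omega


/-- Proposition 7.1.5, bad-parity case: the segment
`η₁ = [e(Δ_l), e(Δ₁)]` of `𝔪₁` is the longest among the segments of `AD(𝔪)`
ending at `e_max = e(Δ₁)`. -/
theorem stmt10 (m : Multiset Seg) (hbad : BadInput m) (hne : m ≠ 0)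
    (Δ : ℕ → Seg) (l : ℕ) (hseq : IsInitSeqBad m Δ l)
    (d : Multiset Seg) (had : IsADBad m d) :
    ∀ Δ0 ∈ d, Δ0.2 = (Δ 1).2 → Δ0.2 - Δ0.1 ≤ (Δ 1).2 - (Δ l).2 := by
  intro Δ0 h0 hEnd
  exact (admain had hbad Δ l hseq Δ0 h0).2 hEnd

end AZ
end

section
/- Work in the bad-parity setting, integer case. Let c₀, c₁, t, n ∈ ℕ with c₀ and c₁ even, and let 𝔪 = c₀·[0,0] + c₁·[−1,1] + t·([−1,0] + [0,1]) + n·([−1,−1] + [1,1]). Then AD(𝔪) = c'₀·[0,0] + c'₁·[−1,1] + t'·([−1,0] + [0,1]) + n'·([−1,−1] + [1,1]), where: (1) if n > c₀: c'₀ = c₁, c'₁ = c₀, t' = t, n' = n − c₀ + c₁; (2) if n ≤ c₀, n even, t even: c'₀ = c₀ − n + c₁, c'₁ = n, t' = t, n' = c₁; (3) if n ≤ c₀, n even, t odd: c'₀ = c₀ − n + c₁ + 2, c'₁ = n, t' = t − 1, n' = c₁ + 1; (4) if n ≤ c₀, n odd, t even: c'₀ = c₀ − n − 1 + c₁, c'₁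 = n − 1, t' = t + 1, n' = c₁; (5) if n ≤ c₀, n odd, t odd: c'₀ = c₀ − n + c₁ + 1, c'₁ = n − 1, t' = t, n' = c₁ + 1. -/
namespace AZ

/-- The multisegment `c₀·[0,0] + c₁·[−1,1] + t·([−1,0] + [0,1]) + n·([−1,−1] + [1,1])`
of Statement 19, in doubled coordinates. -/
def mk19 (c₀ c₁ t n : ℕ) : Multiset Seg :=
  Multiset.replicate c₀ (((0 : ℤ), (0 : ℤ)) : Seg) +
    Multiset.replicate c₁ (((-2 : ℤ), (2 : ℤ)) : Seg) +
    Multiset.replicate t (((-2 : ℤ), (0 : ℤ)) : Seg) +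
    Multiset.replicate t (((0 : ℤ), (2 : ℤ)) : Seg) +
    Multiset.replicate n (((-2 : ℤ), (-2 : ℤ)) : Seg) +
    Multiset.replicate n (((2 : ℤ), (2 : ℤ)) : Seg)

-- infrastructure part 1
lemma count_mk19 (c₀ c₁ t n : ℕ) (x : Seg) :
    (mk19 c₀ c₁ t n).count x =
      (if x = (((0:ℤ),(0:ℤ)) : Seg) then c₀ else 0) +
      (if x = (((-2:ℤ),(2:ℤ)) : Seg) then c₁ else 0) +
      (if x = (((-2:ℤ),(0:ℤ)) : Seg) then t else 0) +
      (if x = (((0:ℤ),(2:ℤ)) : Seg) then t else 0) +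
      (if x = (((-2:ℤ),(-2:ℤ)) : Seg) then n else 0) +
      (if x = (((2:ℤ),(2:ℤ)) : Seg) then n else 0) := by
  simp [mk19, Multiset.count_replicate, eq_comm]

lemma mem_mk19 {c₀ c₁ t n : ℕ} {x : Seg} :
    x ∈ mk19 c₀ c₁ t n ↔
      (c₀ ≠ 0 ∧ x = (((0:ℤ),(0:ℤ)) : Seg)) ∨
      (c₁ ≠ 0 ∧ x = (((-2:ℤ),(2:ℤ)) : Seg)) ∨
      (t ≠ 0 ∧ x = (((-2:ℤ),(0:ℤ)) : Seg)) ∨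
      (t ≠ 0 ∧ x = (((0:ℤ),(2:ℤ)) : Seg)) ∨
      (n ≠ 0 ∧ x = (((-2:ℤ),(-2:ℤ)) : Seg)) ∨
      (n ≠ 0 ∧ x = (((2:ℤ),(2:ℤ)) : Seg)) := by
  simp [mk19, Multiset.mem_replicate]
  tauto

lemma mk19_add (a b c d a' b' c' d' : ℕ) :
    mk19 a b c d + mk19 a' b' c' d' = mk19 (a+a') (b+b') (c+c') (d+d') := by
  ext x
  simp [count_mk19]
  split_ifs <;> omega

lemma mk19_eq {a b c d a' b' c' d' : ℕ} (h1 : a = a') (h2 : b = b') (h3 : c = c')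
    (h4 : d = d') : mk19 a b c d = mk19 a' b' c' d' := by subst h1 h2 h3 h4; rfl

lemma succBad_congr {m : Multiset Seg} {Δ Δ' : ℕ → Seg} {j : ℕ} {x : Seg}
    (hag : ∀ i, 1 ≤ i → i ≤ j → Δ i = Δ' i) (hj : 1 ≤ j)
    (h : SuccBad m Δ j x) : SuccBad m Δ' j x := by
  obtain ⟨h1, h2, h3, h4⟩ := h
  refine ⟨h1, by rw [← hag j hj le_rfl]; exact h2, by rw [← hag j hj le_rfl]; exact h3, ?_⟩
  rintro ⟨i, hi1, hi2, hi3⟩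
  exact h4 ⟨i, hi1, hi2, by rw [hag i hi1 hi2]; exact hi3⟩

lemma initSeq_agree {m : Multiset Seg} {Δ Δ' : ℕ → Seg} {l l' : ℕ}
    (h : IsInitSeqBad m Δ l) (h' : IsInitSeqBad m Δ' l') :
    ∀ i, i ≤ l → i ≤ l' → ∀ j, 1 ≤ j → j ≤ i → Δ j = Δ' j := by
  intro i
  induction i with
  | zero => intro _ _ j hj1 hj0; omega
  | succ k ih =>
    intro hl hl' j hj1 hjk
    rcases Nat.lt_or_ge j (k+1) with hlt | hge
    · exact ih (by omega) (by omega) j hj1 (by omega)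
    · have hjeq : j = k + 1 := by omega
      subst hjeq
      rcases Nat.eq_zero_or_pos k with hk0 | hk1
      · subst hk0
        have e1 : (Δ 1).2 = (Δ' 1).2 :=
          le_antisymm (h'.first_max_end _ h.first_mem) (h.first_max_end _ h'.first_mem)
        exact seg_le_antisymm (h'.first_max _ h.first_mem e1)
          (h.first_max _ h'.first_mem e1.symm)
      · have hag : ∀ i, 1 ≤ i → i ≤ k → Δ i = Δ' i := fun i hi1 hi2 =>
          ih (by omega) (by omega) i hi1 hi2
        have hs1 : SuccBad m Δ' k (Δ (k+1)) :=
          succBad_congr hag hk1 (h.succ k hk1 (by omega))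
        have hs2 : SuccBad m Δ k (Δ' (k+1)) :=
          succBad_congr (fun i a b => (hag i a b).symm) hk1 (h'.succ k hk1 (by omega))
        exact seg_le_antisymm (h'.succ_max k hk1 (by omega) _ hs1)
          (h.succ_max k hk1 (by omega) _ hs2)

lemma initSeq_len {m : Multiset Seg} {Δ Δ' : ℕ → Seg} {l l' : ℕ}
    (h : IsInitSeqBad m Δ l) (h' : IsInitSeqBad m Δ' l') : l = l' := by
  rcases lt_trichotomy l l' with hlt | heq | hgt
  · exfalso
    have hag : ∀ i, 1 ≤ i → i ≤ l → Δ' i = Δ i := fun i a b =>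
      (initSeq_agree h h' l le_rfl (by omega) i a b).symm
    exact h.last _ (succBad_congr hag h.one_le (h'.succ l h.one_le hlt))
  · exact heq
  · exfalso
    have hag : ∀ i, 1 ≤ i → i ≤ l' → Δ i = Δ' i := fun i a b =>
      initSeq_agree h h' l' (by omega) le_rfl i a b
    exact h'.last _ (succBad_congr hag h'.one_le (h.succ l' h'.one_le hgt))

lemma initSeq_unique {m : Multiset Seg} {Δc : ℕ → Seg} {lc : ℕ}
    (hc : IsInitSeqBad m Δc lc) {Δ : ℕ → Seg} {l : ℕ} (h : IsInitSeqBad m Δ l) :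
    l = lc ∧ mOneBad Δ l = mOneBad Δc lc ∧ seqM Δ l = seqM Δc lc := by
  have hl : l = lc := initSeq_len h hc
  subst hl
  have hag : ∀ j, 1 ≤ j → j ≤ l → Δ j = Δc j :=
    initSeq_agree h hc l le_rfl le_rfl
  refine ⟨rfl, ?_, ?_⟩
  · rw [mOneBad, mOneBad, hag 1 le_rfl h.one_le, hag l h.one_le le_rfl]
  · refine Multiset.map_congr rfl ?_
    intro x hx
    rw [← Finset.mem_def, Finset.mem_Icc] at hx
    exact hag x hx.1 hx.2
lemma seqM_one (Δ : ℕ → Seg) : seqM Δ 1 = {Δ 1} := by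
  have : (Finset.Icc 1 1).val = ({1} : Multiset ℕ) := by decide
  rw [seqM, this]; rfl

lemma seqM_two (Δ : ℕ → Seg) : seqM Δ 2 = {Δ 1, Δ 2} := by
  have : (Finset.Icc 1 2).val = ({1, 2} : Multiset ℕ) := by decide
  rw [seqM, this]; rfl

lemma seqM_three (Δ : ℕ → Seg) : seqM Δ 3 = {Δ 1, Δ 2, Δ 3} := by
  have : (Finset.Icc 1 3).val = ({1, 2, 3} : Multiset ℕ) := by decide
  rw [seqM, this]; rfl
instance (a b : Seg) : Decidable (Seg.le a b) := by unfold Seg.le; infer_instance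

/-- canonical sequence, case n ≥ 2, c₀ ≥ 2 -/
def Δa : ℕ → Seg
  | 2 => ((0:ℤ),(0:ℤ))
  | 3 => ((-2:ℤ),(-2:ℤ))
  | _ => ((2:ℤ),(2:ℤ))

lemma init1 {c₀ c₁ t n : ℕ} (hc₀ : 2 ≤ c₀) (hn : 2 ≤ n) :
    IsInitSeqBad (mk19 c₀ c₁ t n) Δa 3 := by
  constructor
  · omega
  · rw [mem_mk19]; right; right; right; right; right; exact ⟨by omega, by decide⟩
  · intro Λ hΛ
    rw [mem_mk19] at hΛ
    rcases hΛ with ⟨-,rfl⟩|⟨-,rfl⟩|⟨-,rfl⟩|⟨-,rfl⟩|⟨-,rfl⟩|⟨-,rfl⟩ <;> decide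
  · intro Λ hΛ he
    rw [mem_mk19] at hΛ
    rcases hΛ with ⟨-,rfl⟩|⟨-,rfl⟩|⟨-,rfl⟩|⟨-,rfl⟩|⟨-,rfl⟩|⟨-,rfl⟩ <;> revert he <;> decide
  · intro j hj1 hj3
    rcases (by omega : j = 1 ∨ j = 2) with rfl | rfl
    · refine ⟨?_, by decide, by decide, fun _ => ?_⟩
      · rw [mem_mk19]; left; exact ⟨by omega, by decide⟩
      · rw [count_mk19]; norm_num [Δa]; omega
    · refine ⟨?_, by decide, by decide, fun _ => ?_⟩
      · rw [mem_mk19]; right; right; right; right; left; exact ⟨by omega, by decide⟩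
      · rw [count_mk19]; norm_num [Δa]; omega
  · intro j hj1 hj3 Λ hΛ
    obtain ⟨hmem, hle, hend, -⟩ := hΛ
    rw [mem_mk19] at hmem
    rcases (by omega : j = 1 ∨ j = 2) with rfl | rfl <;>
      rcases hmem with ⟨-,rfl⟩|⟨-,rfl⟩|⟨-,rfl⟩|⟨-,rfl⟩|⟨-,rfl⟩|⟨-,rfl⟩ <;>
      revert hle hend <;> decide
  · rintro Λ ⟨hmem, hle, hend, -⟩
    rw [mem_mk19] at hmem
    rcases hmem with ⟨-,rfl⟩|⟨-,rfl⟩|⟨-,rfl⟩|⟨-,rfl⟩|⟨-,rfl⟩|⟨-,rfl⟩ <;> revert hend <;> decide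

set_option maxHeartbeats 1000000 in
lemma hash1 {c₀ c₁ t n : ℕ} (hc₀ : 2 ≤ c₀) (hn : 2 ≤ n) :
    mHashBad (mk19 c₀ c₁ t n) Δa 3 = mk19 (c₀-2) c₁ t (n-2) := by
  have hL : ({Δa 1, Δa 2, Δa 3} : Multiset Seg) + Multiset.map Seg.dual {Δa 1, Δa 2, Δa 3}
      = mk19 2 0 0 2 := by decide
  have hF : (Multiset.map Seg.trimEnd {Δa 1, Δa 2, Δa 3} +
      Multiset.map (fun Δ0 => Seg.dual (Seg.trimEnd Δ0)) {Δa 1, Δa 2, Δa 3}).filter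
      (fun Δ0 => Δ0.1 ≤ Δ0.2) = mk19 0 0 0 0 := by decide
  rw [mHashBad, seqM_three, hL, hF]
  have hm : mk19 c₀ c₁ t n = mk19 (c₀-2) c₁ t (n-2) + mk19 2 0 0 2 := by
    rw [mk19_add]; exact mk19_eq (by omega) (by omega) (by omega) (by omega)
  rw [hm, add_tsub_cancel_right, mk19_add]
  exact mk19_eq (by omega) (by omega) (by omega) (by omega)

lemma mone1 : mOneBad Δa 3 = mk19 0 2 0 0 := by decide
/-- canonical sequence for cases 3 and 4 -/
def Δb : ℕ → Seg
  | 2 => ((-2:ℤ),(0:ℤ))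
  | _ => ((2:ℤ),(2:ℤ))

/-- canonical sequence for cases 5 and 6 -/
def Δc : ℕ → Seg
  | 2 => ((-2:ℤ),(0:ℤ))
  | _ => ((0:ℤ),(2:ℤ))

/-- canonical sequence for case 7 -/
def Δd : ℕ → Seg := fun _ => ((-2:ℤ),(2:ℤ))

/-- canonical sequence for case 8 -/
def Δe : ℕ → Seg := fun _ => ((0:ℤ),(0:ℤ))

lemma init2 {c₀ c₁ t : ℕ} (hc₀ : 2 ≤ c₀) :
    IsInitSeqBad (mk19 c₀ c₁ t 1) Δa 2 := by
  constructor
  · omega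
  · rw [mem_mk19]; right; right; right; right; right; exact ⟨by omega, by decide⟩
  · intro Λ hΛ
    rw [mem_mk19] at hΛ
    rcases hΛ with ⟨-,rfl⟩|⟨-,rfl⟩|⟨-,rfl⟩|⟨-,rfl⟩|⟨-,rfl⟩|⟨-,rfl⟩ <;> decide
  · intro Λ hΛ he
    rw [mem_mk19] at hΛ
    rcases hΛ with ⟨-,rfl⟩|⟨-,rfl⟩|⟨-,rfl⟩|⟨-,rfl⟩|⟨-,rfl⟩|⟨-,rfl⟩ <;> revert he <;> decide
  · intro j hj1 hj2
    have : j = 1 := by omega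
    subst this
    refine ⟨?_, by decide, by decide, fun _ => ?_⟩
    · rw [mem_mk19]; left; exact ⟨by omega, by decide⟩
    · rw [count_mk19]; norm_num [Δa]; omega
  · intro j hj1 hj2 Λ hΛ
    obtain ⟨hmem, hle, hend, -⟩ := hΛ
    have : j = 1 := by omega
    subst this
    rw [mem_mk19] at hmem
    rcases hmem with ⟨-,rfl⟩|⟨-,rfl⟩|⟨-,rfl⟩|⟨-,rfl⟩|⟨-,rfl⟩|⟨-,rfl⟩ <;>
      revert hle hend <;> decide
  · rintro Λ ⟨hmem, hle, hend, hct⟩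
    rw [mem_mk19] at hmem
    rcases hmem with ⟨h,rfl⟩|⟨h,rfl⟩|⟨h,rfl⟩|⟨h,rfl⟩|⟨h,rfl⟩|⟨h,rfl⟩
    · exact absurd hend (by decide)
    · exact absurd hend (by decide)
    · exact absurd hend (by decide)
    · exact absurd hend (by decide)
    · have h2 := hct ⟨1, le_rfl, by omega, by decide⟩
      rw [count_mk19] at h2
      norm_num at h2
    · exact absurd hend (by decide)

lemma init3 {c₁ t n : ℕ} (ht : 1 ≤ t) (hn : 1 ≤ n) :
    IsInitSeqBad (mk19 0 c₁ t n) Δb 2 := by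
  constructor
  · omega
  · rw [mem_mk19]; right; right; right; right; right; exact ⟨by omega, by decide⟩
  · intro Λ hΛ
    rw [mem_mk19] at hΛ
    rcases hΛ with ⟨-,rfl⟩|⟨-,rfl⟩|⟨-,rfl⟩|⟨-,rfl⟩|⟨-,rfl⟩|⟨-,rfl⟩ <;> decide
  · intro Λ hΛ he
    rw [mem_mk19] at hΛ
    rcases hΛ with ⟨-,rfl⟩|⟨-,rfl⟩|⟨-,rfl⟩|⟨-,rfl⟩|⟨-,rfl⟩|⟨-,rfl⟩ <;> revert he <;> decide
  · intro j hj1 hj2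
    have : j = 1 := by omega
    subst this
    refine ⟨?_, by decide, by decide, ?_⟩
    · rw [mem_mk19]; right; right; left; exact ⟨by omega, by decide⟩
    · rintro ⟨i, hi1, hi2, hi3⟩
      have : i = 1 := by omega
      subst this
      exact absurd hi3 (by decide)
  · intro j hj1 hj2 Λ hΛ
    obtain ⟨hmem, hle, hend, -⟩ := hΛ
    have : j = 1 := by omega
    subst this
    rw [mem_mk19] at hmem
    rcases hmem with ⟨h,rfl⟩|⟨h,rfl⟩|⟨h,rfl⟩|⟨h,rfl⟩|⟨h,rfl⟩|⟨h,rfl⟩ <;>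
      first
      | (exact absurd h (by omega))
      | (revert hle hend; decide)
  · rintro Λ ⟨hmem, hle, hend, -⟩
    rw [mem_mk19] at hmem
    rcases hmem with ⟨h,rfl⟩|⟨h,rfl⟩|⟨h,rfl⟩|⟨h,rfl⟩|⟨h,rfl⟩|⟨h,rfl⟩ <;>
      first
      | (exact absurd h (by omega))
      | (exact absurd hend (by decide))
      | (exact absurd hle (by decide))

lemma init4 {c₁ n : ℕ} (hn : 1 ≤ n) :
    IsInitSeqBad (mk19 0 c₁ 0 n) Δb 1 := by
  constructor
  · omega
  · rw [mem_mk19]; right; right; right; right; right; exact ⟨by omega, by decide⟩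
  · intro Λ hΛ
    rw [mem_mk19] at hΛ
    rcases hΛ with ⟨-,rfl⟩|⟨-,rfl⟩|⟨-,rfl⟩|⟨-,rfl⟩|⟨-,rfl⟩|⟨-,rfl⟩ <;> decide
  · intro Λ hΛ he
    rw [mem_mk19] at hΛ
    rcases hΛ with ⟨-,rfl⟩|⟨-,rfl⟩|⟨-,rfl⟩|⟨-,rfl⟩|⟨-,rfl⟩|⟨-,rfl⟩ <;> revert he <;> decide
  · intro j hj1 hj2; omega
  · intro j hj1 hj2; omega
  · rintro Λ ⟨hmem, hle, hend, -⟩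
    rw [mem_mk19] at hmem
    rcases hmem with ⟨h,rfl⟩|⟨h,rfl⟩|⟨h,rfl⟩|⟨h,rfl⟩|⟨h,rfl⟩|⟨h,rfl⟩ <;>
      first
      | (exact absurd h (by omega))
      | (exact absurd hend (by decide))
      | (exact absurd hle (by decide))

lemma init5 {c₀ c₁ t : ℕ} (ht : 2 ≤ t) :
    IsInitSeqBad (mk19 c₀ c₁ t 0) Δc 2 := by
  constructor
  · omega
  · rw [mem_mk19]; right; right; right; left; exact ⟨by omega, by decide⟩
  · intro Λ hΛ
    rw [mem_mk19] at hΛ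
    rcases hΛ with ⟨h,rfl⟩|⟨h,rfl⟩|⟨h,rfl⟩|⟨h,rfl⟩|⟨h,rfl⟩|⟨h,rfl⟩ <;>
      first
      | (exact absurd h (by omega))
      | decide
  · intro Λ hΛ he
    rw [mem_mk19] at hΛ
    rcases hΛ with ⟨h,rfl⟩|⟨h,rfl⟩|⟨h,rfl⟩|⟨h,rfl⟩|⟨h,rfl⟩|⟨h,rfl⟩ <;>
      first
      | (exact absurd h (by omega))
      | (revert he; decide)
  · intro j hj1 hj2
    have : j = 1 := by omega
    subst this
    refine ⟨?_, by decide, by decide, fun _ => ?_⟩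
    · rw [mem_mk19]; right; right; left; exact ⟨by omega, by decide⟩
    · rw [count_mk19]; norm_num [Δc]; omega
  · intro j hj1 hj2 Λ hΛ
    obtain ⟨hmem, hle, hend, -⟩ := hΛ
    have : j = 1 := by omega
    subst this
    rw [mem_mk19] at hmem
    rcases hmem with ⟨h,rfl⟩|⟨h,rfl⟩|⟨h,rfl⟩|⟨h,rfl⟩|⟨h,rfl⟩|⟨h,rfl⟩ <;>
      first
      | (exact absurd h (by omega))
      | (revert hle hend; decide)
  · rintro Λ ⟨hmem, hle, hend, -⟩
    rw [mem_mk19] at hmem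
    rcases hmem with ⟨h,rfl⟩|⟨h,rfl⟩|⟨h,rfl⟩|⟨h,rfl⟩|⟨h,rfl⟩|⟨h,rfl⟩ <;>
      first
      | (exact absurd h (by omega))
      | (exact absurd hend (by decide))
      | (exact absurd hle (by decide))

lemma init6 {c₀ c₁ : ℕ} :
    IsInitSeqBad (mk19 c₀ c₁ 1 0) Δc 1 := by
  constructor
  · omega
  · rw [mem_mk19]; right; right; right; left; exact ⟨by omega, by decide⟩
  · intro Λ hΛ
    rw [mem_mk19] at hΛ
    rcases hΛ with ⟨h,rfl⟩|⟨h,rfl⟩|⟨h,rfl⟩|⟨h,rfl⟩|⟨h,rfl⟩|⟨h,rfl⟩ <;>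
      first
      | (exact absurd h (by omega))
      | decide
  · intro Λ hΛ he
    rw [mem_mk19] at hΛ
    rcases hΛ with ⟨h,rfl⟩|⟨h,rfl⟩|⟨h,rfl⟩|⟨h,rfl⟩|⟨h,rfl⟩|⟨h,rfl⟩ <;>
      first
      | (exact absurd h (by omega))
      | (revert he; decide)
  · intro j hj1 hj2; omega
  · intro j hj1 hj2; omega
  · rintro Λ ⟨hmem, hle, hend, hct⟩
    rw [mem_mk19] at hmem
    rcases hmem with ⟨h,rfl⟩|⟨h,rfl⟩|⟨h,rfl⟩|⟨h,rfl⟩|⟨h,rfl⟩|⟨h,rfl⟩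
    · exact absurd hle (by decide)
    · exact absurd hend (by decide)
    · have h2 := hct ⟨1, le_rfl, le_rfl, by decide⟩
      rw [count_mk19] at h2
      norm_num at h2
    · exact absurd hend (by decide)
    · exact absurd h (by omega)
    · exact absurd h (by omega)

lemma init7 {c₀ c₁ : ℕ} (hc₁ : 1 ≤ c₁) :
    IsInitSeqBad (mk19 c₀ c₁ 0 0) Δd 1 := by
  constructor
  · omega
  · rw [mem_mk19]; right; left; exact ⟨by omega, by decide⟩
  · intro Λ hΛ
    rw [mem_mk19] at hΛ
    rcases hΛ with ⟨h,rfl⟩|⟨h,rfl⟩|⟨h,rfl⟩|⟨h,rfl⟩|⟨h,rfl⟩|⟨h,rfl⟩ <;>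
      first
      | (exact absurd h (by omega))
      | decide
  · intro Λ hΛ he
    rw [mem_mk19] at hΛ
    rcases hΛ with ⟨h,rfl⟩|⟨h,rfl⟩|⟨h,rfl⟩|⟨h,rfl⟩|⟨h,rfl⟩|⟨h,rfl⟩ <;>
      first
      | (exact absurd h (by omega))
      | (revert he; decide)
  · intro j hj1 hj2; omega
  · intro j hj1 hj2; omega
  · rintro Λ ⟨hmem, hle, hend, -⟩
    rw [mem_mk19] at hmem
    rcases hmem with ⟨h,rfl⟩|⟨h,rfl⟩|⟨h,rfl⟩|⟨h,rfl⟩|⟨h,rfl⟩|⟨h,rfl⟩ <;>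
      first
      | (exact absurd h (by omega))
      | (exact absurd hend (by decide))
      | (exact absurd hle (by decide))

lemma init8 {c₀ : ℕ} (hc₀ : 1 ≤ c₀) :
    IsInitSeqBad (mk19 c₀ 0 0 0) Δe 1 := by
  constructor
  · omega
  · rw [mem_mk19]; left; exact ⟨by omega, by decide⟩
  · intro Λ hΛ
    rw [mem_mk19] at hΛ
    rcases hΛ with ⟨h,rfl⟩|⟨h,rfl⟩|⟨h,rfl⟩|⟨h,rfl⟩|⟨h,rfl⟩|⟨h,rfl⟩ <;>
      first
      | (exact absurd h (by omega))
      | decide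
  · intro Λ hΛ he
    rw [mem_mk19] at hΛ
    rcases hΛ with ⟨h,rfl⟩|⟨h,rfl⟩|⟨h,rfl⟩|⟨h,rfl⟩|⟨h,rfl⟩|⟨h,rfl⟩ <;>
      first
      | (exact absurd h (by omega))
      | (revert he; decide)
  · intro j hj1 hj2; omega
  · intro j hj1 hj2; omega
  · rintro Λ ⟨hmem, hle, hend, -⟩
    rw [mem_mk19] at hmem
    rcases hmem with ⟨h,rfl⟩|⟨h,rfl⟩|⟨h,rfl⟩|⟨h,rfl⟩|⟨h,rfl⟩|⟨h,rfl⟩ <;>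
      first
      | (exact absurd h (by omega))
      | (exact absurd hend (by decide))
      | (exact absurd hle (by decide))
lemma mHash_congr {m : Multiset Seg} {Δ Δ' : ℕ → Seg} {l l' : ℕ}
    (h : seqM Δ l = seqM Δ' l') : mHashBad m Δ l = mHashBad m Δ' l' := by
  rw [mHashBad, mHashBad, h]

lemma hash2 {c₀ c₁ t : ℕ} (hc₀ : 2 ≤ c₀) :
    mHashBad (mk19 c₀ c₁ t 1) Δa 2 = mk19 (c₀-2) c₁ t 0 := by
  have hL : ({Δa 1, Δa 2} : Multiset Seg) + Multiset.map Seg.dual {Δa 1, Δa 2}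
      = mk19 2 0 0 1 := by decide
  have hF : (Multiset.map Seg.trimEnd {Δa 1, Δa 2} +
      Multiset.map (fun Δ0 => Seg.dual (Seg.trimEnd Δ0)) {Δa 1, Δa 2}).filter
      (fun Δ0 => Δ0.1 ≤ Δ0.2) = mk19 0 0 0 0 := by decide
  rw [mHashBad, seqM_two, hL, hF]
  have hm : mk19 c₀ c₁ t 1 = mk19 (c₀-2) c₁ t 0 + mk19 2 0 0 1 := by
    rw [mk19_add]; exact mk19_eq (by omega) (by omega) (by omega) (by omega)
  rw [hm, add_tsub_cancel_right, mk19_add]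
  exact mk19_eq (by omega) (by omega) (by omega) (by omega)

lemma hash3 {c₁ t n : ℕ} (ht : 1 ≤ t) (hn : 1 ≤ n) :
    mHashBad (mk19 0 c₁ t n) Δb 2 = mk19 0 c₁ (t-1) n := by
  have hL : ({Δb 1, Δb 2} : Multiset Seg) + Multiset.map Seg.dual {Δb 1, Δb 2}
      = mk19 0 0 1 1 := by decide
  have hF : (Multiset.map Seg.trimEnd {Δb 1, Δb 2} +
      Multiset.map (fun Δ0 => Seg.dual (Seg.trimEnd Δ0)) {Δb 1, Δb 2}).filter
      (fun Δ0 => Δ0.1 ≤ Δ0.2) = mk19 0 0 0 1 := by decide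
  rw [mHashBad, seqM_two, hL, hF]
  have hm : mk19 0 c₁ t n = mk19 0 c₁ (t-1) (n-1) + mk19 0 0 1 1 := by
    rw [mk19_add]; exact mk19_eq (by omega) (by omega) (by omega) (by omega)
  rw [hm, add_tsub_cancel_right, mk19_add]
  exact mk19_eq (by omega) (by omega) (by omega) (by omega)

lemma hash4 {c₁ n : ℕ} (hn : 1 ≤ n) :
    mHashBad (mk19 0 c₁ 0 n) Δb 1 = mk19 0 c₁ 0 (n-1) := by
  have hL : ({Δb 1} : Multiset Seg) + Multiset.map Seg.dual {Δb 1}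
      = mk19 0 0 0 1 := by decide
  have hF : (Multiset.map Seg.trimEnd {Δb 1} +
      Multiset.map (fun Δ0 => Seg.dual (Seg.trimEnd Δ0)) {Δb 1}).filter
      (fun Δ0 => Δ0.1 ≤ Δ0.2) = mk19 0 0 0 0 := by decide
  rw [mHashBad, seqM_one, hL, hF]
  have hm : mk19 0 c₁ 0 n = mk19 0 c₁ 0 (n-1) + mk19 0 0 0 1 := by
    rw [mk19_add]; exact mk19_eq (by omega) (by omega) (by omega) (by omega)
  rw [hm, add_tsub_cancel_right, mk19_add]
  exact mk19_eq (by omega) (by omega) (by omega) (by omega)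

lemma hash5 {c₀ c₁ t : ℕ} (ht : 2 ≤ t) :
    mHashBad (mk19 c₀ c₁ t 0) Δc 2 = mk19 (c₀+2) c₁ (t-2) 1 := by
  have hL : ({Δc 1, Δc 2} : Multiset Seg) + Multiset.map Seg.dual {Δc 1, Δc 2}
      = mk19 0 0 2 0 := by decide
  have hF : (Multiset.map Seg.trimEnd {Δc 1, Δc 2} +
      Multiset.map (fun Δ0 => Seg.dual (Seg.trimEnd Δ0)) {Δc 1, Δc 2}).filter
      (fun Δ0 => Δ0.1 ≤ Δ0.2) = mk19 2 0 0 1 := by decide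
  rw [mHashBad, seqM_two, hL, hF]
  have hm : mk19 c₀ c₁ t 0 = mk19 c₀ c₁ (t-2) 0 + mk19 0 0 2 0 := by
    rw [mk19_add]; exact mk19_eq (by omega) (by omega) (by omega) (by omega)
  rw [hm, add_tsub_cancel_right, mk19_add]
  exact mk19_eq (by omega) (by omega) (by omega) (by omega)

lemma hash6 {c₀ c₁ : ℕ} :
    mHashBad (mk19 c₀ c₁ 1 0) Δc 1 = mk19 (c₀+2) c₁ 0 0 := by
  have hL : ({Δc 1} : Multiset Seg) + Multiset.map Seg.dual {Δc 1}
      = mk19 0 0 1 0 := by decide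
  have hF : (Multiset.map Seg.trimEnd {Δc 1} +
      Multiset.map (fun Δ0 => Seg.dual (Seg.trimEnd Δ0)) {Δc 1}).filter
      (fun Δ0 => Δ0.1 ≤ Δ0.2) = mk19 2 0 0 0 := by decide
  rw [mHashBad, seqM_one, hL, hF]
  have hm : mk19 c₀ c₁ 1 0 = mk19 c₀ c₁ 0 0 + mk19 0 0 1 0 := by
    rw [mk19_add]; exact mk19_eq (by omega) (by omega) (by omega) (by omega)
  rw [hm, add_tsub_cancel_right, mk19_add]
  exact mk19_eq (by omega) (by omega) (by omega) (by omega)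

lemma hash7 {c₀ c₁ : ℕ} (hc₁ : 2 ≤ c₁) :
    mHashBad (mk19 c₀ c₁ 0 0) Δd 1 = mk19 c₀ (c₁-2) 1 0 := by
  have hL : ({Δd 1} : Multiset Seg) + Multiset.map Seg.dual {Δd 1}
      = mk19 0 2 0 0 := by decide
  have hF : (Multiset.map Seg.trimEnd {Δd 1} +
      Multiset.map (fun Δ0 => Seg.dual (Seg.trimEnd Δ0)) {Δd 1}).filter
      (fun Δ0 => Δ0.1 ≤ Δ0.2) = mk19 0 0 1 0 := by decide
  rw [mHashBad, seqM_one, hL, hF]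
  have hm : mk19 c₀ c₁ 0 0 = mk19 c₀ (c₁-2) 0 0 + mk19 0 2 0 0 := by
    rw [mk19_add]; exact mk19_eq (by omega) (by omega) (by omega) (by omega)
  rw [hm, add_tsub_cancel_right, mk19_add]
  exact mk19_eq (by omega) (by omega) (by omega) (by omega)

lemma hash8 {c₀ : ℕ} (hc₀ : 2 ≤ c₀) :
    mHashBad (mk19 c₀ 0 0 0) Δe 1 = mk19 (c₀-2) 0 0 0 := by
  have hL : ({Δe 1} : Multiset Seg) + Multiset.map Seg.dual {Δe 1}
      = mk19 2 0 0 0 := by decide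
  have hF : (Multiset.map Seg.trimEnd {Δe 1} +
      Multiset.map (fun Δ0 => Seg.dual (Seg.trimEnd Δ0)) {Δe 1}).filter
      (fun Δ0 => Δ0.1 ≤ Δ0.2) = mk19 0 0 0 0 := by decide
  rw [mHashBad, seqM_one, hL, hF]
  have hm : mk19 c₀ 0 0 0 = mk19 (c₀-2) 0 0 0 + mk19 2 0 0 0 := by
    rw [mk19_add]; exact mk19_eq (by omega) (by omega) (by omega) (by omega)
  rw [hm, add_tsub_cancel_right, mk19_add]
  exact mk19_eq (by omega) (by omega) (by omega) (by omega)

lemma mone2 : mOneBad Δa 2 = mk19 0 0 1 0 := by decide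
lemma mone3 : mOneBad Δb 2 = mk19 0 0 1 0 := by decide
lemma mone4 : mOneBad Δb 1 = mk19 0 0 0 1 := by decide
lemma mone5 : mOneBad Δc 2 = mk19 0 0 1 0 := by decide
lemma mone6 : mOneBad Δc 1 = mk19 0 0 0 1 := by decide
lemma mone7 : mOneBad Δd 1 = mk19 0 0 0 1 := by decide
lemma mone8 : mOneBad Δe 1 = mk19 2 0 0 0 := by decide
/-- The closed form of the bad-parity dual of `mk19 c₀ c₁ t n` (for `c₀`, `c₁` even). -/
def f (c₀ c₁ t n : ℕ) : Multiset Seg :=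
  if c₀ < n then mk19 c₁ c₀ t (n - c₀ + c₁)
  else if n % 2 = 0 then
    (if t % 2 = 0 then mk19 (c₀ - n + c₁) n t c₁ else mk19 (c₀ - n + c₁ + 2) n (t - 1) (c₁ + 1))
  else
    (if t % 2 = 0 then mk19 (c₀ - n - 1 + c₁) (n - 1) (t + 1) c₁
     else mk19 (c₀ - n + c₁ + 1) (n - 1) t (c₁ + 1))

set_option maxHeartbeats 4000000 in
lemma mainAD : ∀ W c₀ c₁ t n, c₀ + 2*c₁ + 3*t + n ≤ W → c₀ % 2 = 0 → c₁ % 2 = 0 →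
    ∀ d, IsADBad (mk19 c₀ c₁ t n) d → d = f c₀ c₁ t n := by
  intro W
  induction W with
  | zero =>
    intro c₀ c₁ t n hW h0 h1 d had
    obtain ⟨rfl, rfl, rfl, rfl⟩ : c₀ = 0 ∧ c₁ = 0 ∧ t = 0 ∧ n = 0 := by omega
    have hz : mk19 0 0 0 0 = 0 := by decide
    rw [hz] at had
    cases had with
    | zero => decide
    | step hm hseq hrec => exact absurd rfl hm
  | succ W ih =>
    intro c₀ c₁ t n hW h0 h1 d had
    generalize hmeq : mk19 c₀ c₁ t n = M at had
    cases had with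
    | zero =>
      have h₀ := congrArg (Multiset.count (((0:ℤ),(0:ℤ)) : Seg)) hmeq
      have h₁ := congrArg (Multiset.count (((-2:ℤ),(2:ℤ)) : Seg)) hmeq
      have h₂ := congrArg (Multiset.count (((-2:ℤ),(0:ℤ)) : Seg)) hmeq
      have h₃ := congrArg (Multiset.count (((-2:ℤ),(-2:ℤ)) : Seg)) hmeq
      rw [count_mk19] at h₀ h₁ h₂ h₃
      norm_num at h₀ h₁ h₂ h₃
      obtain ⟨rfl, rfl, rfl, rfl⟩ : c₀ = 0 ∧ c₁ = 0 ∧ t = 0 ∧ n = 0 := by omega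
      decide
    | @step M Δ l d' hm hseq hrec =>
      subst hmeq
      have hnz : ¬(c₀ = 0 ∧ c₁ = 0 ∧ t = 0 ∧ n = 0) := by
        rintro ⟨rfl, rfl, rfl, rfl⟩; exact hm rfl
      by_cases hn2 : 2 ≤ n
      · by_cases hc2 : 2 ≤ c₀
        · -- case 1
          obtain ⟨hl, hmone, hsm⟩ := initSeq_unique (init1 hc2 hn2) hseq
          rw [mHash_congr hsm, hash1 hc2 hn2] at hrec
          have hd' := ih (c₀-2) c₁ t (n-2) (by omega) (by omega) h1 d' hrec
          rw [hmone, mone1, hd']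
          unfold f
          split_ifs <;> (try exact ‹False›.elim) <;> (rw [mk19_add]; exact mk19_eq (by omega) (by omega) (by omega) (by omega))
        · obtain rfl : c₀ = 0 := by omega
          by_cases ht1 : 1 ≤ t
          · -- case 3
            obtain ⟨hl, hmone, hsm⟩ := initSeq_unique (init3 ht1 (by omega)) hseq
            rw [mHash_congr hsm, hash3 ht1 (by omega)] at hrec
            have hd' := ih 0 c₁ (t-1) n (by omega) (by omega) h1 d' hrec
            rw [hmone, mone3, hd']
            unfold f
            split_ifs <;> (try exact ‹False›.elim) <;> (rw [mk19_add]; exact mk19_eq (by omega) (by omega) (by omega) (by omega))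
          · obtain rfl : t = 0 := by omega
            -- case 4
            obtain ⟨hl, hmone, hsm⟩ := initSeq_unique (init4 (by omega)) hseq
            rw [mHash_congr hsm, hash4 (by omega)] at hrec
            have hd' := ih 0 c₁ 0 (n-1) (by omega) (by omega) h1 d' hrec
            rw [hmone, mone4, hd']
            unfold f
            split_ifs <;> (try exact ‹False›.elim) <;> (rw [mk19_add]; exact mk19_eq (by omega) (by omega) (by omega) (by omega))
      · by_cases hn1 : n = 1
        · subst hn1
          by_cases hc2 : 2 ≤ c₀
          · -- case 2
            obtain ⟨hl, hmone, hsm⟩ := initSeq_unique (init2 hc2) hseq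
            rw [mHash_congr hsm, hash2 hc2] at hrec
            have hd' := ih (c₀-2) c₁ t 0 (by omega) (by omega) h1 d' hrec
            rw [hmone, mone2, hd']
            unfold f
            split_ifs <;> (try exact ‹False›.elim) <;> (rw [mk19_add]; exact mk19_eq (by omega) (by omega) (by omega) (by omega))
          · obtain rfl : c₀ = 0 := by omega
            by_cases ht1 : 1 ≤ t
            · -- case 3 with n = 1
              obtain ⟨hl, hmone, hsm⟩ := initSeq_unique (init3 ht1 (by omega)) hseq
              rw [mHash_congr hsm, hash3 ht1 (by omega)] at hrec
              have hd' := ih 0 c₁ (t-1) 1 (by omega) (by omega) h1 d' hrec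
              rw [hmone, mone3, hd']
              unfold f
              split_ifs <;> (try exact ‹False›.elim) <;> (rw [mk19_add]; exact mk19_eq (by omega) (by omega) (by omega) (by omega))
            · obtain rfl : t = 0 := by omega
              -- case 4 with n = 1
              obtain ⟨hl, hmone, hsm⟩ := initSeq_unique (init4 (by omega)) hseq
              rw [mHash_congr hsm, hash4 (by omega)] at hrec
              have hd' := ih 0 c₁ 0 0 (by omega) (by omega) h1 d' hrec
              rw [hmone, mone4, hd']
              unfold f
              split_ifs <;> (try exact ‹False›.elim) <;> (rw [mk19_add]; exact mk19_eq (by omega) (by omega) (by omega) (by omega))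
        · obtain rfl : n = 0 := by omega
          by_cases ht2 : 2 ≤ t
          · -- case 5
            obtain ⟨hl, hmone, hsm⟩ := initSeq_unique (init5 ht2) hseq
            rw [mHash_congr hsm, hash5 ht2] at hrec
            have hd' := ih (c₀+2) c₁ (t-2) 1 (by omega) (by omega) h1 d' hrec
            rw [hmone, mone5, hd']
            unfold f
            split_ifs <;> (try exact ‹False›.elim) <;> (rw [mk19_add]; exact mk19_eq (by omega) (by omega) (by omega) (by omega))
          · by_cases ht1 : t = 1
            · subst ht1
              -- case 6
              obtain ⟨hl, hmone, hsm⟩ := initSeq_unique init6 hseq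
              rw [mHash_congr hsm, hash6] at hrec
              have hd' := ih (c₀+2) c₁ 0 0 (by omega) (by omega) h1 d' hrec
              rw [hmone, mone6, hd']
              unfold f
              split_ifs <;> (try exact ‹False›.elim) <;> (rw [mk19_add]; exact mk19_eq (by omega) (by omega) (by omega) (by omega))
            · obtain rfl : t = 0 := by omega
              by_cases hc1 : 1 ≤ c₁
              · -- case 7
                obtain ⟨hl, hmone, hsm⟩ := initSeq_unique (init7 hc1) hseq
                rw [mHash_congr hsm, hash7 (by omega)] at hrec
                have hd' := ih c₀ (c₁-2) 1 0 (by omega) h0 (by omega) d' hrec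
                rw [hmone, mone7, hd']
                unfold f
                split_ifs <;> (try exact ‹False›.elim) <;> (rw [mk19_add]; exact mk19_eq (by omega) (by omega) (by omega) (by omega))
              · obtain rfl : c₁ = 0 := by omega
                -- case 8
                obtain ⟨hl, hmone, hsm⟩ := initSeq_unique (init8 (by omega)) hseq
                rw [mHash_congr hsm, hash8 (by omega)] at hrec
                have hd' := ih (c₀-2) 0 0 0 (by omega) (by omega) rfl d' hrec
                rw [hmone, mone8, hd']
                unfold f
                split_ifs <;> (try exact ‹False›.elim) <;> (rw [mk19_add]; exact mk19_eq (by omega) (by omega) (by omega) (by omega))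
/-- Proposition 11.2.3: explicit computation of the bad-parity
dual of `𝔪 = c₀·[0,0] + c₁·[−1,1] + t·([−1,0] + [0,1]) + n·([−1,−1] + [1,1])`,
with `c₀`, `c₁` even. -/
theorem stmt19 (c₀ c₁ t n : ℕ) (h0 : Even c₀) (h1 : Even c₁)
    (d : Multiset Seg) (had : IsADBad (mk19 c₀ c₁ t n) d) :
    (c₀ < n → d = mk19 c₁ c₀ t (n - c₀ + c₁)) ∧
    (n ≤ c₀ → Even n → Even t → d = mk19 (c₀ - n + c₁) n t c₁) ∧
    (n ≤ c₀ → Even n → Odd t → d = mk19 (c₀ - n + c₁ + 2) n (t - 1) (c₁ + 1)) ∧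
    (n ≤ c₀ → Odd n → Even t → d = mk19 (c₀ - n - 1 + c₁) (n - 1) (t + 1) c₁) ∧
    (n ≤ c₀ → Odd n → Odd t → d = mk19 (c₀ - n + c₁ + 1) (n - 1) t (c₁ + 1)) := by
  have hd := mainAD (c₀ + 2*c₁ + 3*t + n) c₀ c₁ t n le_rfl (Nat.even_iff.mp h0)
    (Nat.even_iff.mp h1) d had
  subst hd
  refine ⟨?_, ?_, ?_, ?_, ?_⟩
  · intro h
    unfold f
    rw [if_pos h]
  · intro hle hn ht
    rw [Nat.even_iff] at hn ht
    unfold f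
    rw [if_neg (by omega), if_pos hn, if_pos ht]
  · intro hle hn ht
    rw [Nat.even_iff] at hn
    rw [Nat.odd_iff] at ht
    unfold f
    rw [if_neg (by omega), if_pos hn, if_neg (by omega)]
  · intro hle hn ht
    rw [Nat.odd_iff] at hn
    rw [Nat.even_iff] at ht
    unfold f
    rw [if_neg (by omega), if_neg (by omega), if_pos ht]
  · intro hle hn ht
    rw [Nat.odd_iff] at hn ht
    unfold f
    rw [if_neg (by omega), if_neg (by omega), if_neg (by omega)]

end AZ
end
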